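/- arXiv:2205.03150 — 7 statements merged into one kernel-verified Lean document; each statement's English description precedes it below -/
import Mathlib

section
/- Let d ≥ 1 be an integer, γ > 0, and I ≥ 2 real. Then the sum over all d-tuples of positive integers j with product exceeding I of ∏_{i=1}^d j_i^{-γ-1} is bounded above by a constant (depending only on d and γ) times I^{-γ} (log I)^{d-1}. -/
open Real
open scoped ENNReal Classical

namespace TailProdAux

lemma ptle {γ : ℝ} (hγ : 0 < γ) {x : ℝ} (hx : 1 ≤ x) :
    x ^ (-γ - 1) ≤ (2 ^ (γ + 1) / γ) * (x ^ (-γ) - (x + 1) ^ (-γ)) := by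
  have hx0 : 0 < x := lt_of_lt_of_le one_pos hx
  have hx1 : 0 < x + 1 := by linarith
  -- log lower bound : log ((x+1)/x) ≥ 1/(x+1)
  have hlog : 1 / (x + 1) ≤ Real.log ((x + 1) / x) := by
    have h1 : Real.log (x / (x + 1)) ≤ x / (x + 1) - 1 :=
      Real.log_le_sub_one_of_pos (by positivity)
    have h2 : Real.log ((x + 1) / x) = - Real.log (x / (x + 1)) := by
      rw [← Real.log_inv]; congr 1; field_simp
    have h3 : x / (x + 1) - 1 = - (1 / (x + 1)) := by field_simp; ring
    rw [h2]; rw [h3] at h1; linarith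
  -- ((x+1)/x)^γ ≥ 1 + γ/(x+1)
  have hber : 1 + γ / (x + 1) ≤ ((x + 1) / x) ^ γ := by
    have hd : (0:ℝ) < (x + 1) / x := by positivity
    rw [Real.rpow_def_of_pos hd]
    have h4 : γ * (1 / (x + 1)) ≤ γ * Real.log ((x + 1) / x) :=
      mul_le_mul_of_nonneg_left hlog hγ.le
    have h5 := Real.add_one_le_exp (γ * Real.log ((x + 1) / x))
    have : γ * (1 / (x+1)) = γ / (x+1) := by ring
    rw [mul_comm (Real.log ((x+1)/x)) γ]
    linarith [h4, h5, this]
  -- x^(-γ) - (x+1)^(-γ) ≥ γ * (x+1)^(-γ-1)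
  have hkey : γ * (x + 1) ^ (-γ - 1) ≤ x ^ (-γ) - (x + 1) ^ (-γ) := by
    have hpow : x ^ (-γ) = (x + 1) ^ (-γ) * ((x + 1) / x) ^ γ := by
      rw [Real.div_rpow hx1.le hx0.le, Real.rpow_neg hx1.le, Real.rpow_neg hx0.le]
      field_simp
    have hp1 : (0:ℝ) < (x + 1) ^ (-γ) := Real.rpow_pos_of_pos hx1 _
    have h6 : (x + 1) ^ (-γ) * (1 + γ / (x + 1)) ≤ x ^ (-γ) := by
      rw [hpow]; exact mul_le_mul_of_nonneg_left hber hp1.le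
    have h7 : (x + 1) ^ (-γ - 1) = (x + 1) ^ (-γ) / (x + 1) := by
      rw [Real.rpow_sub hx1, Real.rpow_one]
    rw [h7]
    have : (x + 1) ^ (-γ) * (1 + γ / (x + 1)) = (x + 1) ^ (-γ) + γ * ((x + 1) ^ (-γ) / (x + 1)) := by
      ring
    linarith [h6, this.symm.le]
  -- (x+1)^(-γ-1) ≥ 2^(-γ-1) * x^(-γ-1)
  have hdbl : 2 ^ (-γ - 1) * x ^ (-γ - 1) ≤ (x + 1) ^ (-γ - 1) := by
    have h8 : (x + 1) ≤ 2 * x := by linarith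
    have h9 : (2 * x) ^ (-γ - 1) ≤ (x + 1) ^ (-γ - 1) :=
      Real.rpow_le_rpow_of_nonpos hx1 h8 (by linarith)
    rwa [Real.mul_rpow (by norm_num) hx0.le] at h9
  have h2p : (0:ℝ) < 2 ^ (γ + 1) := Real.rpow_pos_of_pos two_pos _
  have hinv : (2:ℝ) ^ (γ + 1) * 2 ^ (-γ - 1) = 1 := by
    rw [← Real.rpow_add two_pos]; norm_num
  have hstart : x ^ (-γ - 1) = (2 ^ (γ + 1) / γ) * (γ * (2 ^ (-γ-1) * x ^ (-γ - 1))) := by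
    have : (2 ^ (γ + 1) / γ) * (γ * ((2:ℝ) ^ (-γ-1) * x ^ (-γ - 1)))
        = (2 ^ (γ+1) * 2 ^ (-γ-1)) * x ^ (-γ-1) := by
      field_simp
    rw [this, hinv, one_mul]
  calc x ^ (-γ - 1) = (2 ^ (γ + 1) / γ) * (γ * (2 ^ (-γ-1) * x ^ (-γ - 1))) := hstart
    _ ≤ (2 ^ (γ + 1) / γ) * (γ * (x + 1) ^ (-γ - 1)) := by
        apply mul_le_mul_of_nonneg_left _ (by positivity)
        exact mul_le_mul_of_nonneg_left hdbl hγ.le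
    _ ≤ (2 ^ (γ + 1) / γ) * (x ^ (-γ) - (x + 1) ^ (-γ)) := by
        apply mul_le_mul_of_nonneg_left hkey (by positivity)


lemma tail_summable {γ : ℝ} (hγ : 0 < γ) (x : ℝ) :
    Summable (fun m : ℕ => if x < (m:ℝ) then (m:ℝ) ^ (-γ - 1) else 0) := by
  apply Summable.of_nonneg_of_le (fun m => by positivity)
    (fun m => ?_) (Real.summable_nat_rpow.mpr (show -γ-1 < -1 by linarith))
  split
  · exact le_refl _
  · positivity

lemma tail_bound {γ : ℝ} (hγ : 0 < γ) {x : ℝ} (hx : 1 ≤ x) :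
    (∑' m : ℕ, if x < (m:ℝ) then (m:ℝ) ^ (-γ - 1) else 0) ≤ (2 ^ (γ + 1) / γ) * x ^ (-γ) := by
  set K := (2:ℝ) ^ (γ + 1) / γ with hK
  have hK0 : 0 < K := by positivity
  set n0 := ⌊x⌋₊ with hn0
  have hn01 : 1 ≤ n0 := Nat.le_floor (by exact_mod_cast hx)
  have hxn0 : x ≤ (n0:ℝ) + 1 := by
    have := Nat.lt_floor_add_one x; push_cast at this ⊢; linarith
  set b : ℕ → ℝ := fun m => (m:ℝ) ^ (-γ) with hb
  have hlast : K * b (n0+1) ≤ K * x ^ (-γ) := by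
    apply mul_le_mul_of_nonneg_left _ hK0.le
    apply Real.rpow_le_rpow_of_nonpos (by linarith) (by push_cast; linarith) (by linarith)
  apply (tail_summable hγ x).tsum_le_of_sum_le
  intro s
  obtain ⟨N, hN⟩ : ∃ N, s ⊆ Finset.range N := ⟨(s.sup id) + 1, fun a ha =>
    Finset.mem_range.mpr (Nat.lt_succ_of_le (Finset.le_sup (f := id) ha))⟩
  have hmono : ∑ m ∈ s, (if x < (m:ℝ) then (m:ℝ) ^ (-γ - 1) else 0)
      ≤ ∑ m ∈ Finset.range N, (if x < (m:ℝ) then (m:ℝ) ^ (-γ - 1) else 0) :=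
    Finset.sum_le_sum_of_subset_of_nonneg hN (fun m _ _ => by positivity)
  refine hmono.trans ?_
  have hbmono : ∀ m : ℕ, 1 ≤ m → b (m+1) ≤ b m := by
    intro m hm
    apply Real.rpow_le_rpow_of_nonpos _ (by push_cast; linarith) (by linarith)
    have : (1:ℝ) ≤ (m:ℝ) := by exact_mod_cast hm
    linarith
  have hterm : ∀ m : ℕ, (if x < (m:ℝ) then (m:ℝ) ^ (-γ - 1) else 0)
      ≤ (if n0 + 1 ≤ m then K * (b m - b (m+1)) else 0) := by
    intro m
    by_cases hc : x < (m:ℝ)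
    · have hm1 : (1:ℝ) ≤ m := le_trans hx hc.le
      have hmn : n0 + 1 ≤ m := by
        have : n0 < m := (Nat.floor_lt (by linarith)).mpr hc
        omega
      rw [if_pos hc, if_pos hmn]
      have := ptle hγ hm1
      simp only [hb]; push_cast
      exact this
    · rw [if_neg hc]
      split
      · rename_i hmn
        have : b (m+1) ≤ b m := hbmono m (by omega)
        nlinarith
      · exact le_refl _
  refine (Finset.sum_le_sum fun m _ => hterm m).trans ?_
  rcases le_or_gt N (n0 + 1) with h | h
  · have hz : ∀ m ∈ Finset.range N, (if n0 + 1 ≤ m then K * (b m - b (m+1)) else 0) = 0 := by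
      intro m hm
      rw [if_neg]
      have := Finset.mem_range.mp hm
      omega
    rw [Finset.sum_congr rfl hz, Finset.sum_const, smul_zero]
    positivity
  · have hsub : Finset.Ico (n0+1) N ⊆ Finset.range N := by
      intro m hm; rw [Finset.mem_range]; exact (Finset.mem_Ico.mp hm).2
    rw [← Finset.sum_subset hsub (fun m hm hnm => by
      rw [if_neg]
      intro hcon
      exact hnm (Finset.mem_Ico.mpr ⟨hcon, Finset.mem_range.mp hm⟩))]
    have heq : ∀ m ∈ Finset.Ico (n0+1) N,
        (if n0 + 1 ≤ m then K * (b m - b (m+1)) else 0) = K * (b m - b (m+1)) := by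
      intro m hm; rw [if_pos (Finset.mem_Ico.mp hm).1]
    rw [Finset.sum_congr rfl heq, ← Finset.mul_sum]
    have htel : ∑ m ∈ Finset.Ico (n0+1) N, (b m - b (m+1)) = b (n0+1) - b N := by
      rw [Finset.sum_Ico_eq_sum_range]
      have : ∀ i, b (n0+1+i) - b (n0+1+i+1) = (fun i => b (n0+1+i)) i - (fun i => b (n0+1+i)) (i+1) := by
        intro i; simp [Nat.add_assoc]
      simp_rw [this]
      rw [Finset.sum_range_sub' (fun i => b (n0+1+i)) (N - (n0+1))]
      congr 2
      omega
    rw [htel]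
    refine le_trans ?_ hlast
    apply mul_le_mul_of_nonneg_left _ hK0.le
    have : 0 ≤ b N := by positivity
    linarith

lemma harm_summable (I : ℝ) :
    Summable (fun m : ℕ => if 1 ≤ m ∧ (m:ℝ) ≤ I then 1/(m:ℝ) else 0) := by
  apply summable_of_ne_finset_zero (s := Finset.range (⌊I⌋₊ + 1))
  intro m hm
  rw [Finset.mem_range, not_lt] at hm
  rw [if_neg]
  rintro ⟨-, h2⟩
  have h3 : I < (⌊I⌋₊:ℝ) + 1 := Nat.lt_floor_add_one I
  have h4 : ((⌊I⌋₊ + 1 : ℕ):ℝ) ≤ (m:ℝ) := by exact_mod_cast hm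
  push_cast at h4
  linarith

lemma harm_bound {I : ℝ} (hI : 1 ≤ I) :
    (∑' m : ℕ, if 1 ≤ m ∧ (m:ℝ) ≤ I then 1/(m:ℝ) else 0) ≤ Real.log I + 1 := by
  set n0 := ⌊I⌋₊ with hn0
  have hn01 : 1 ≤ n0 := Nat.le_floor (by exact_mod_cast hI)
  rw [tsum_eq_sum (s := Finset.range (n0 + 1)) (by
    intro m hm
    rw [Finset.mem_range, not_lt] at hm
    rw [if_neg]
    rintro ⟨-, h2⟩
    have h3 : I < (n0:ℝ) + 1 := Nat.lt_floor_add_one I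
    have h4 : ((n0 + 1 : ℕ):ℝ) ≤ (m:ℝ) := by exact_mod_cast hm
    push_cast at h4
    linarith)]
  have hsub : Finset.Icc 1 n0 ⊆ Finset.range (n0 + 1) := by
    intro m hm; rw [Finset.mem_range]; exact Nat.lt_succ_of_le (Finset.mem_Icc.mp hm).2
  rw [← Finset.sum_subset hsub (fun m hm hnm => by
    rw [if_neg]
    rintro ⟨h1, -⟩
    exact hnm (Finset.mem_Icc.mpr ⟨h1, Nat.lt_succ_iff.mp (Finset.mem_range.mp hm)⟩))]
  have heq : ∀ m ∈ Finset.Icc 1 n0, (if 1 ≤ m ∧ (m:ℝ) ≤ I then 1/(m:ℝ) else 0) = ((m:ℝ))⁻¹ := by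
    intro m hm
    obtain ⟨h1, h2⟩ := Finset.mem_Icc.mp hm
    have h3 : (m:ℝ) ≤ I :=
      le_trans (show (m:ℝ) ≤ (n0:ℝ) by exact_mod_cast h2) (Nat.floor_le (by linarith))
    rw [if_pos ⟨h1, h3⟩, one_div]
  rw [Finset.sum_congr rfl heq]
  have hh : (harmonic n0 : ℝ) = ∑ m ∈ Finset.Icc 1 n0, ((m:ℝ))⁻¹ := by
    rw [harmonic_eq_sum_Icc]; push_cast; rfl
  rw [← hh]
  have := harmonic_le_one_add_log n0
  have hlog : Real.log n0 ≤ Real.log I :=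
    Real.log_le_log (by exact_mod_cast hn01) (Nat.floor_le (by linarith))
  linarith

noncomputable def g (γ : ℝ) (n : ℕ) : ℝ≥0∞ := ENNReal.ofReal ((n : ℝ) ^ (-γ - 1))

noncomputable def Zr (γ : ℝ) : ℝ := ∑' n : ℕ, (n : ℝ) ^ (-γ - 1)

noncomputable def T (γ : ℝ) (d : ℕ) (I : ℝ) : ℝ≥0∞ :=
  ∑' j : Fin d → ℕ, if I < ∏ i, ((j i : ℝ)) then ∏ i, g γ (j i) else 0

lemma g_zero {γ : ℝ} (hγ : 0 < γ) : g γ 0 = 0 := by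
  rw [g, Nat.cast_zero, Real.zero_rpow (by linarith), ENNReal.ofReal_zero]

-- the one-variable reduction
lemma T_one (γ : ℝ) (I : ℝ) :
    T γ 1 I = ∑' m : ℕ, if I < (m:ℝ) then g γ m else 0 := by
  rw [T]
  rw [← (Equiv.funUnique (Fin 1) ℕ).symm.tsum_eq]
  apply tsum_congr
  intro m
  simp [Fin.prod_univ_one]

lemma T_succ {γ : ℝ} (hγ : 0 < γ) (d : ℕ) (I : ℝ) :
    T γ (d+1) I = ∑' m : ℕ, g γ m * T γ d (I / m) := by
  rw [T, ← (Fin.consEquiv fun _ => ℕ).tsum_eq, ENNReal.tsum_prod']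
  apply tsum_congr
  intro m
  rcases Nat.eq_zero_or_pos m with rfl | hm
  · simp only [g_zero hγ, zero_mul]
    convert tsum_zero with j
    simp only [Fin.consEquiv_apply, Fin.prod_univ_succ, Fin.cons_zero, Fin.cons_succ,
      g_zero hγ, zero_mul, ite_self]
  · have hm0 : (0:ℝ) < (m:ℝ) := by exact_mod_cast hm
    have key : ∀ j : Fin d → ℕ,
        (if I < ∏ i : Fin (d+1), (((Fin.consEquiv fun _ => ℕ) (m, j) i : ℕ) : ℝ) then
          ∏ i : Fin (d+1), g γ ((Fin.consEquiv fun _ => ℕ) (m, j) i) else 0)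
        = g γ m * (if I / (m:ℝ) < ∏ i, ((j i : ℝ)) then ∏ i, g γ (j i) else 0) := by
      intro j
      have hcond : (I < (m:ℝ) * ∏ i, ((j i : ℝ))) ↔ I / (m:ℝ) < ∏ i, ((j i : ℝ)) := by
        rw [div_lt_iff₀ hm0, mul_comm]
      simp only [Fin.consEquiv_apply, Fin.prod_univ_succ, Fin.cons_zero, Fin.cons_succ]
      rw [if_congr hcond rfl rfl, mul_ite, mul_zero]
    rw [tsum_congr key, ENNReal.tsum_mul_left, T]

lemma summable_g {γ : ℝ} (hγ : 0 < γ) : Summable (fun n : ℕ => (n:ℝ) ^ (-γ - 1)) :=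
  Real.summable_nat_rpow.mpr (by linarith)

lemma Zr_nonneg {γ : ℝ} (hγ : 0 < γ) : 0 ≤ Zr γ :=
  tsum_nonneg (fun n => by positivity)

lemma gsum {γ : ℝ} (hγ : 0 < γ) : ∑' n : ℕ, g γ n = ENNReal.ofReal (Zr γ) := by
  rw [Zr, ENNReal.ofReal_tsum_of_nonneg (fun n => by positivity) (summable_g hγ)]
  rfl

lemma tail_bound' {γ : ℝ} (hγ : 0 < γ) {x : ℝ} (hx : 1 ≤ x) :
    (∑' m : ℕ, if x < (m:ℝ) then g γ m else 0)
      ≤ ENNReal.ofReal ((2 ^ (γ + 1) / γ) * x ^ (-γ)) := by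
  have he : ∀ m : ℕ, (if x < (m:ℝ) then g γ m else 0)
      = ENNReal.ofReal (if x < (m:ℝ) then (m:ℝ) ^ (-γ - 1) else 0) := by
    intro m
    rw [apply_ite ENNReal.ofReal, ENNReal.ofReal_zero, g]
  rw [tsum_congr he, ← ENNReal.ofReal_tsum_of_nonneg (fun m => by positivity) (tail_summable hγ x)]
  exact ENNReal.ofReal_le_ofReal (tail_bound hγ hx)

lemma harm_bound' {I : ℝ} (hI : 1 ≤ I) :
    (∑' m : ℕ, ENNReal.ofReal (if 1 ≤ m ∧ (m:ℝ) ≤ I then 1/(m:ℝ) else 0))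
      ≤ ENNReal.ofReal (Real.log I + 1) := by
  rw [← ENNReal.ofReal_tsum_of_nonneg (fun m => by positivity) (harm_summable I)]
  exact ENNReal.ofReal_le_ofReal (harm_bound hI)

lemma T_le_Z {γ : ℝ} (hγ : 0 < γ) (I : ℝ) :
    T γ 1 I ≤ ENNReal.ofReal (Zr γ) := by
  rw [T_one, ← gsum hγ]
  refine ENNReal.tsum_le_tsum (fun m => ?_)
  split
  · exact le_refl _
  · exact zero_le

lemma main_aux (γ : ℝ) (hγ : 0 < γ) (d : ℕ) : ∃ C : ℝ, 0 < C ∧ ∀ I : ℝ,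
    T γ (d+1) I ≤ ENNReal.ofReal (C * (max I 1) ^ (-γ) * (Real.log (max I 1) + 1) ^ d) := by
  set c1 := (2:ℝ) ^ (γ + 1) / γ with hc1def
  have hc1 : 0 < c1 := by positivity
  induction d with
  | zero =>
    refine ⟨max (Zr γ) c1 + 1, by positivity, fun I => ?_⟩
    rcases le_or_gt I 1 with hI | hI
    · rw [max_eq_right hI]
      simp only [Real.one_rpow, Real.log_one, zero_add, pow_zero, mul_one]
      refine (T_le_Z hγ I).trans (ENNReal.ofReal_le_ofReal ?_)
      have := le_max_left (Zr γ) c1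
      linarith
    · rw [max_eq_left hI.le]
      simp only [pow_zero, mul_one]
      rw [T_one]
      refine (tail_bound' hγ hI.le).trans (ENNReal.ofReal_le_ofReal ?_)
      have h1 : (0:ℝ) ≤ I ^ (-γ) := by positivity
      have h2 : c1 ≤ max (Zr γ) c1 + 1 := by
        have := le_max_right (Zr γ) c1; linarith
      exact mul_le_mul_of_nonneg_right h2 h1
  | succ d IH =>
    obtain ⟨C, hC, hCb⟩ := IH
    refine ⟨max (Zr γ * C) (C * (1 + c1)) + 1, by positivity, fun I => ?_⟩
    set C' := max (Zr γ * C) (C * (1 + c1)) + 1 with hC'def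
    have hC'1 : Zr γ * C ≤ C' := by have := le_max_left (Zr γ * C) (C * (1 + c1)); linarith
    have hC'2 : C * (1 + c1) ≤ C' := by have := le_max_right (Zr γ * C) (C * (1 + c1)); linarith
    rw [T_succ hγ (d+1) I]
    rcases le_or_gt I 1 with hI | hI
    · -- small I : bound by total sum
      have hterm : ∀ m : ℕ, g γ m * T γ (d+1) (I / m) ≤ g γ m * ENNReal.ofReal C := by
        intro m
        rcases Nat.eq_zero_or_pos m with rfl | hm
        · rw [g_zero hγ, zero_mul, zero_mul]
        · have hm1 : (1:ℝ) ≤ (m:ℝ) := by exact_mod_cast hm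
          refine mul_le_mul_right ?_ _
          have := hCb (I / m)
          have hmax : max (I / (m:ℝ)) 1 = 1 := max_eq_right (by
            rw [div_le_one (by linarith)]; linarith)
          rw [hmax] at this
          simpa using this
      refine (ENNReal.tsum_le_tsum hterm).trans ?_
      rw [ENNReal.tsum_mul_right, gsum hγ, ← ENNReal.ofReal_mul (Zr_nonneg hγ)]
      rw [max_eq_right hI]
      simp only [Real.one_rpow, Real.log_one, zero_add, one_pow, mul_one]
      exact ENNReal.ofReal_le_ofReal (by linarith)
    · -- large I
      have hI1 : 1 ≤ I := hI.le
      have hI0 : (0:ℝ) < I := by linarith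
      set Y := Real.log I + 1 with hYdef
      have hY1 : 1 ≤ Y := by
        have := Real.log_nonneg hI1; simp only [hYdef]; linarith
      set A := ENNReal.ofReal (C * I ^ (-γ) * Y ^ d) with hAdef
      set B := ENNReal.ofReal C with hBdef
      have hterm : ∀ m : ℕ, g γ m * T γ (d+1) (I / m)
          ≤ A * ENNReal.ofReal (if 1 ≤ m ∧ (m:ℝ) ≤ I then 1/(m:ℝ) else 0)
            + B * (if I < (m:ℝ) then g γ m else 0) := by
        intro m
        rcases Nat.eq_zero_or_pos m with rfl | hm
        · rw [g_zero hγ, zero_mul]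
          exact zero_le
        · have hm1 : (1:ℝ) ≤ (m:ℝ) := by exact_mod_cast hm
          have hm0 : (0:ℝ) < (m:ℝ) := by linarith
          rcases le_or_gt (m:ℝ) I with hmI | hmI
          · -- m ≤ I
            rw [if_neg (not_lt.mpr hmI), mul_zero, add_zero, if_pos ⟨hm, hmI⟩]
            have hdiv1 : 1 ≤ I / (m:ℝ) := (one_le_div hm0).mpr hmI
            have hbnd := hCb (I / m)
            rw [max_eq_left hdiv1] at hbnd
            have hg : g γ m * T γ (d+1) (I/m)
                ≤ ENNReal.ofReal ((m:ℝ) ^ (-γ-1) * (C * (I/(m:ℝ)) ^ (-γ) * (Real.log (I/(m:ℝ)) + 1) ^ d)) := by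
              rw [ENNReal.ofReal_mul (by positivity), g]
              exact mul_le_mul_right hbnd _
            refine hg.trans ?_
            rw [hAdef, ← ENNReal.ofReal_mul (by positivity)]
            apply ENNReal.ofReal_le_ofReal
            -- real inequality
            have e1 : (I/(m:ℝ)) ^ (-γ) = I ^ (-γ) * (m:ℝ) ^ γ := by
              rw [Real.div_rpow hI0.le hm0.le, Real.rpow_neg hm0.le]
              field_simp
            have e2 : (m:ℝ) ^ (-γ-1) * (m:ℝ) ^ γ = 1/(m:ℝ) := by
              rw [← Real.rpow_add hm0]
              rw [show -γ-1+γ = -1 by ring, Real.rpow_neg_one, one_div]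
            have hX0 : 0 ≤ Real.log (I/(m:ℝ)) + 1 := by
              have := Real.log_nonneg hdiv1; linarith
            have hXle : (Real.log (I/(m:ℝ)) + 1) ^ d ≤ Y ^ d := by
              apply pow_le_pow_left₀ hX0
              have : I/(m:ℝ) ≤ I := div_le_self hI0.le hm1
              have := Real.log_le_log (by positivity) this
              simp only [hYdef]; linarith
            calc (m:ℝ) ^ (-γ-1) * (C * (I/(m:ℝ)) ^ (-γ) * (Real.log (I/(m:ℝ)) + 1) ^ d)
                = (C * (I ^ (-γ) * (1/(m:ℝ)))) * (Real.log (I/(m:ℝ)) + 1) ^ d := by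
                  rw [e1, ← e2]; ring
              _ ≤ (C * (I ^ (-γ) * (1/(m:ℝ)))) * Y ^ d := by
                  apply mul_le_mul_of_nonneg_left hXle (by positivity)
              _ = C * I ^ (-γ) * Y ^ d * (1/(m:ℝ)) := by ring
          · -- m > I
            rw [if_neg (by rintro ⟨-, h⟩; linarith), ENNReal.ofReal_zero, mul_zero, zero_add,
              if_pos hmI]
            have hbnd := hCb (I / m)
            have hmax : max (I / (m:ℝ)) 1 = 1 := max_eq_right (by
              rw [div_le_one hm0]; linarith)
            rw [hmax] at hbnd
            simp only [Real.one_rpow, Real.log_one, zero_add, one_pow, mul_one] at hbnd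
            rw [mul_comm]
            exact mul_le_mul_left hbnd _
      refine (ENNReal.tsum_le_tsum hterm).trans ?_
      rw [ENNReal.tsum_add, ENNReal.tsum_mul_left, ENNReal.tsum_mul_left]
      have h1 : A * (∑' m : ℕ, ENNReal.ofReal (if 1 ≤ m ∧ (m:ℝ) ≤ I then 1/(m:ℝ) else 0))
          ≤ A * ENNReal.ofReal Y := mul_le_mul_right (harm_bound' hI1) _
      have h2 : B * (∑' m : ℕ, if I < (m:ℝ) then g γ m else 0)
          ≤ B * ENNReal.ofReal (c1 * I ^ (-γ)) := mul_le_mul_right (tail_bound' hγ hI1) _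
      refine (add_le_add h1 h2).trans ?_
      rw [hAdef, hBdef, ← ENNReal.ofReal_mul (by positivity), ← ENNReal.ofReal_mul hC.le,
        ← ENNReal.ofReal_add (by positivity) (by positivity)]
      rw [max_eq_left hI1]
      apply ENNReal.ofReal_le_ofReal
      have hP : (0:ℝ) ≤ I ^ (-γ) := by positivity
      have hQ : (1:ℝ) ≤ Y ^ (d+1) := one_le_pow₀ hY1
      have hQ0 : (0:ℝ) ≤ Y ^ (d+1) := by linarith
      have key : C * I ^ (-γ) * Y ^ d * Y + C * (c1 * I ^ (-γ)) ≤ C' * I ^ (-γ) * Y ^ (d+1) := by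
        have e3 : C * I ^ (-γ) * Y ^ d * Y = C * I ^ (-γ) * Y ^ (d+1) := by ring
        rw [e3]
        have h4 : C * c1 * I ^ (-γ) ≤ C * c1 * I ^ (-γ) * Y ^ (d+1) := by
          nlinarith [mul_nonneg (mul_nonneg hC.le hc1.le) hP]
        nlinarith [mul_le_mul_of_nonneg_right hC'2 (mul_nonneg hP hQ0)]
      calc C * I ^ (-γ) * Y ^ d * Y + C * (c1 * I ^ (-γ))
          ≤ C' * I ^ (-γ) * Y ^ (d+1) := key
        _ = C' * I ^ (-γ) * (Real.log I + 1) ^ (d+1) := by rw [hYdef]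


end TailProdAux

open TailProdAux in
/-- Tail sum bound: `∑_{∏ j_i > I} ∏ j_i^{-γ-1} ≤ C · I^{-γ} (log I)^{d-1}`
for a constant `C` depending only on `d` and `γ`. -/
theorem tail_prod_sum_upper (d : ℕ) (hd : 1 ≤ d) (γ : ℝ) (hγ : 0 < γ) :
    ∃ C > (0:ℝ), ∀ I : ℝ, 2 ≤ I →
      (∑' j : {j : Fin d → ℕ // (∀ i, 1 ≤ j i) ∧ I < ∏ i, (j i : ℝ)},
          ∏ i, ((j.1 i : ℝ)) ^ (-γ - 1))
        ≤ C * I ^ (-γ) * (Real.log I) ^ (d - 1) := by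
  obtain ⟨d', rfl⟩ : ∃ d', d = d' + 1 := ⟨d - 1, by omega⟩
  obtain ⟨C, hC, hCb⟩ := main_aux γ hγ d'
  have hlog2 : (0:ℝ) < Real.log 2 := Real.log_pos one_lt_two
  refine ⟨C * (1 + 1/Real.log 2) ^ d', by positivity, fun I hI => ?_⟩
  have hI1 : (1:ℝ) ≤ I := by linarith
  have hI0 : (0:ℝ) < I := by linarith
  set s : Set (Fin (d'+1) → ℕ) := {j | (∀ i, 1 ≤ j i) ∧ I < ∏ i, ((j i : ℝ))} with hs
  set f : (Fin (d'+1) → ℕ) → ℝ := fun j => ∏ i, ((j i : ℝ)) ^ (-γ - 1) with hf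
  set R : ℝ := C * I ^ (-γ) * (Real.log I + 1) ^ d' with hR
  have hR0 : 0 ≤ R := by
    have : (0:ℝ) ≤ Real.log I := Real.log_nonneg hI1
    positivity
  have hsub : (∑' j : s, ENNReal.ofReal (f j)) ≤ T γ (d'+1) I := by
    rw [tsum_subtype s (fun j => ENNReal.ofReal (f j)), T]
    refine ENNReal.tsum_le_tsum (fun j => ?_)
    by_cases hj : j ∈ s
    · rw [Set.indicator_of_mem hj, if_pos hj.2, hf]
      rw [ENNReal.ofReal_prod_of_nonneg (fun i _ => by positivity)]
      exact le_refl _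
    · rw [Set.indicator_of_notMem hj]
      exact zero_le
  have hE : (∑' j : s, ENNReal.ofReal (f j)) ≤ ENNReal.ofReal R := by
    refine hsub.trans ?_
    have := hCb I
    rwa [max_eq_left hI1] at this
  have h3 : (∑' j : s, f j) = (∑' j : s, ENNReal.ofReal (f j)).toReal := by
    rw [ENNReal.tsum_toReal_eq (fun a => ENNReal.ofReal_ne_top)]
    exact (tsum_congr (fun a => (ENNReal.toReal_ofReal (by positivity)).symm))
  have h4 : (∑' j : s, f j) ≤ R := by
    rw [h3]
    calc (∑' j : s, ENNReal.ofReal (f j)).toReal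
        ≤ (ENNReal.ofReal R).toReal := ENNReal.toReal_mono ENNReal.ofReal_ne_top hE
      _ = R := ENNReal.toReal_ofReal hR0
  refine le_trans h4 ?_
  -- R ≤ C * (1+1/log 2)^d' * I^(-γ) * (log I)^(d'+1-1)
  have hlogI : Real.log 2 ≤ Real.log I := Real.log_le_log two_pos hI
  have hlogI0 : 0 < Real.log I := lt_of_lt_of_le hlog2 hlogI
  have hYle : Real.log I + 1 ≤ (1 + 1/Real.log 2) * Real.log I := by
    have h5 : 1 ≤ Real.log I / Real.log 2 := (one_le_div hlog2).mpr hlogI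
    have h6 : Real.log I / Real.log 2 = Real.log I * (1/Real.log 2) := by ring
    nlinarith [h5, h6]
  have hpow : (Real.log I + 1) ^ d' ≤ ((1 + 1/Real.log 2) * Real.log I) ^ d' :=
    pow_le_pow_left₀ (by linarith) hYle d'
  have : R ≤ C * (1 + 1/Real.log 2) ^ d' * I ^ (-γ) * (Real.log I) ^ d' := by
    rw [hR]
    calc C * I ^ (-γ) * (Real.log I + 1) ^ d'
        ≤ C * I ^ (-γ) * ((1 + 1/Real.log 2) * Real.log I) ^ d' := by
          apply mul_le_mul_of_nonneg_left hpow (by positivity)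
      _ = C * (1 + 1/Real.log 2) ^ d' * I ^ (-γ) * (Real.log I) ^ d' := by
          rw [mul_pow]; ring
  simpa using this
end

section
/- Let d ≥ 1 be an integer, γ > 0, and I sufficiently large (depending on d and γ). Then the sum over all d-tuples of positive integers j with product exceeding I of ∏_{i=1}^d j_i^{-γ-1} is bounded below by a constant (depending only on d and γ) times I^{-γ} (log I)^{d-1}. -/
open Real

private lemma pow2_add_inj {a b s u : ℕ} (hs : s < 2 ^ a) (hu : u < 2 ^ b)
    (h : 2 ^ a + s = 2 ^ b + u) : a = b ∧ s = u := by
  have ha : Nat.log 2 (2 ^ a + s) = a :=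
    Nat.log_eq_of_pow_le_of_lt_pow (Nat.le_add_right _ _)
      (by rw [pow_succ]; omega)
  have hb : Nat.log 2 (2 ^ b + u) = b :=
    Nat.log_eq_of_pow_le_of_lt_pow (Nat.le_add_right _ _)
      (by rw [pow_succ]; omega)
  have hab : a = b := by rw [← ha, ← hb, h]
  subst hab
  exact ⟨rfl, by omega⟩

private lemma two_pow_calc (K dd : ℕ) (γ : ℝ) :
    (2 : ℝ) ^ K * (((2 : ℝ) ^ (K + dd)) ^ (-γ - 1))
      = ((2 : ℝ) ^ K) ^ (-γ) * ((2 : ℝ) ^ dd) ^ (-γ - 1) := by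
  have hK : (0 : ℝ) < (2 : ℝ) ^ K := by positivity
  have hd : (0 : ℝ) < (2 : ℝ) ^ dd := by positivity
  rw [pow_add, Real.mul_rpow hK.le hd.le, ← mul_assoc]
  congr 1
  have h1 : ((2 : ℝ) ^ K) ^ (-γ - 1 + 1) = ((2 : ℝ) ^ K) ^ (-γ - 1) * (2 : ℝ) ^ K :=
    Real.rpow_add_one hK.ne' _
  rw [show -γ - 1 + 1 = -γ by ring] at h1
  rw [h1]; ring

private lemma summable_prod_rpow (m : ℕ) (γ : ℝ) (hγ : 0 < γ) :
    Summable (fun j : Fin m → ℕ => ∏ i, ((j i : ℝ)) ^ (-γ - 1)) := by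
  induction m with
  | zero =>
      haveI : Subsingleton (Fin 0 → ℕ) := ⟨fun a b => funext fun i => i.elim0⟩
      exact Summable.of_finite
  | succ m ih =>
      have hsingle : Summable (fun n : ℕ => ((n : ℝ)) ^ (-γ - 1)) :=
        Real.summable_nat_rpow.mpr (by linarith)
      have key : Summable (fun x : ℕ × (Fin m → ℕ) =>
          ((x.1 : ℝ)) ^ (-γ - 1) * ∏ i, ((x.2 i : ℝ)) ^ (-γ - 1)) := by
        apply Summable.mul_of_nonneg hsingle ih
        · exact fun n => Real.rpow_nonneg (Nat.cast_nonneg _) _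
        · exact fun b => Finset.prod_nonneg fun i _ => Real.rpow_nonneg (Nat.cast_nonneg _) _
      have hcomp : ((fun j : Fin (m + 1) → ℕ => ∏ i, ((j i : ℝ)) ^ (-γ - 1)) ∘
          (Fin.consEquiv (fun _ : Fin (m + 1) => ℕ)))
          = fun x : ℕ × (Fin m → ℕ) =>
              ((x.1 : ℝ)) ^ (-γ - 1) * ∏ i, ((x.2 i : ℝ)) ^ (-γ - 1) := by
        funext x
        simp only [Function.comp_apply, Fin.consEquiv_apply]
        rw [Fin.prod_univ_succ]
        simp
      rw [← (Fin.consEquiv (fun _ : Fin (m + 1) => ℕ)).summable_iff, hcomp]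
      exact key

private lemma core_bound (m K M : ℕ) (hMK : (m + 1) * M ≤ K) (γ I : ℝ) (hγ : 0 < γ)
    (hIK : I < (2 : ℝ) ^ K) :
    ((M : ℝ)) ^ m * ((2 : ℝ) ^ K * (((2 : ℝ) ^ (K + (m + 1))) ^ (-γ - 1)))
      ≤ ∑' j : {j : Fin (m + 1) → ℕ // (∀ i, 1 ≤ j i) ∧ I < ∏ i, (j i : ℝ)},
          ∏ i, ((j.1 i : ℝ)) ^ (-γ - 1) := by
  classical
  set e : (Fin m → Fin M) → Fin (m + 1) → ℕ :=
    fun k => Fin.snoc (fun j => (k j : ℕ)) (K - ∑ j, (k j : ℕ)) with he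
  have hksum : ∀ k : Fin m → Fin M, ∑ j, (k j : ℕ) ≤ K := by
    intro k
    calc ∑ j, (k j : ℕ) ≤ ∑ _j : Fin m, M :=
          Finset.sum_le_sum fun j _ => (k j).isLt.le
      _ = m * M := by simp [Finset.sum_const, mul_comm]
      _ ≤ (m + 1) * M := Nat.mul_le_mul_right _ (Nat.le_succ _)
      _ ≤ K := hMK
  have hesum : ∀ k : Fin m → Fin M, ∑ i, e k i = K := by
    intro k
    rw [Fin.sum_univ_castSucc]
    simp only [he, Fin.snoc_castSucc, Fin.snoc_last]
    have := hksum k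
    omega
  let B := (k : Fin m → Fin M) × (∀ i : Fin (m + 1), Fin (2 ^ e k i))
  let p : B → Fin (m + 1) → ℕ := fun b i => 2 ^ e b.1 i + (b.2 i : ℕ)
  have hp1 : ∀ (b : B) (i : Fin (m + 1)), 1 ≤ p b i := fun b i =>
    le_trans (Nat.one_le_two_pow) (Nat.le_add_right _ _)
  have hp2 : ∀ b : B, (2 : ℝ) ^ K ≤ ∏ i, (p b i : ℝ) := by
    intro b
    have h1 : ∏ i : Fin (m + 1), (2 : ℝ) ^ e b.1 i ≤ ∏ i, (p b i : ℝ) := by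
      refine Finset.prod_le_prod (fun i _ => by positivity) (fun i _ => ?_)
      have : ((2 ^ e b.1 i : ℕ) : ℝ) ≤ ((p b i : ℕ) : ℝ) := by
        exact_mod_cast Nat.le_add_right _ _
      simpa using this
    calc (2 : ℝ) ^ K = ∏ i : Fin (m + 1), (2 : ℝ) ^ e b.1 i := by
          rw [Finset.prod_pow_eq_pow_sum, hesum]
      _ ≤ _ := h1
  have hpI : ∀ b : B, I < ∏ i, (p b i : ℝ) := fun b => lt_of_lt_of_le hIK (hp2 b)
  let g : B → {j : Fin (m + 1) → ℕ // (∀ i, 1 ≤ j i) ∧ I < ∏ i, (j i : ℝ)} :=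
    fun b => ⟨p b, hp1 b, hpI b⟩
  have hginj : Function.Injective g := by
    rintro ⟨k, t⟩ ⟨k', t'⟩ h
    have hfun : ∀ i, 2 ^ e k i + (t i : ℕ) = 2 ^ e k' i + (t' i : ℕ) := fun i =>
      congrFun (congrArg Subtype.val h) i
    have hei : ∀ i, e k i = e k' i := fun i =>
      (pow2_add_inj (t i).isLt (t' i).isLt (hfun i)).1
    have hk : k = k' := by
      funext j
      have := hei (Fin.castSucc j)
      simp only [he, Fin.snoc_castSucc] at this
      exact Fin.ext this
    subst hk
    have ht : t = t' := by
      funext i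
      exact Fin.ext (pow2_add_inj (t i).isLt (t' i).isLt (hfun i)).2
    rw [ht]
  have hterm : ∀ b : B,
      ((2 : ℝ) ^ (K + (m + 1))) ^ (-γ - 1) ≤ ∏ i, ((p b i : ℝ)) ^ (-γ - 1) := by
    intro b
    have hprod : ∏ i : Fin (m + 1), ((2 : ℝ) ^ (e b.1 i + 1)) ^ (-γ - 1)
        = ((2 : ℝ) ^ (K + (m + 1))) ^ (-γ - 1) := by
      rw [Real.finset_prod_rpow _ _ (fun i _ => by positivity)]
      congr 1
      rw [Finset.prod_pow_eq_pow_sum]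
      congr 1
      rw [Finset.sum_add_distrib, hesum]
      simp
    rw [← hprod]
    refine Finset.prod_le_prod (fun i _ => Real.rpow_nonneg (by positivity) _) (fun i _ => ?_)
    refine Real.rpow_le_rpow_of_nonpos ?_ ?_ (by linarith)
    · exact_mod_cast hp1 b i
    · have h2 : (p b i : ℕ) < 2 ^ (e b.1 i + 1) := by
        have := (b.2 i).isLt
        simp only [p, pow_succ]
        omega
      calc ((p b i : ℕ) : ℝ) ≤ ((2 ^ (e b.1 i + 1) : ℕ) : ℝ) := by exact_mod_cast h2.le
        _ = (2 : ℝ) ^ (e b.1 i + 1) := by push_cast; ring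
  have hsum : Summable (fun j : {j : Fin (m + 1) → ℕ // (∀ i, 1 ≤ j i) ∧ I < ∏ i, (j i : ℝ)} =>
      ∏ i, ((j.1 i : ℝ)) ^ (-γ - 1)) := by
    have := (summable_prod_rpow (m + 1) γ hγ).subtype
      {j : Fin (m + 1) → ℕ | (∀ i, 1 ≤ j i) ∧ I < ∏ i, (j i : ℝ)}
    exact this
  have hmain : (∑' _b : B, ((2 : ℝ) ^ (K + (m + 1))) ^ (-γ - 1))
      ≤ ∑' j : {j : Fin (m + 1) → ℕ // (∀ i, 1 ≤ j i) ∧ I < ∏ i, (j i : ℝ)},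
          ∏ i, ((j.1 i : ℝ)) ^ (-γ - 1) := by
    refine Summable.tsum_le_tsum_of_inj g hginj
      (fun c _ => Finset.prod_nonneg fun i _ => Real.rpow_nonneg (Nat.cast_nonneg _) _)
      (fun b => hterm b) Summable.of_finite hsum
  refine le_trans (le_of_eq ?_) hmain
  rw [tsum_fintype, Finset.sum_const, Finset.card_univ, nsmul_eq_mul]
  have hcard : (Fintype.card B : ℝ) = ((M : ℝ)) ^ m * (2 : ℝ) ^ K := by
    have h1 : Fintype.card B = ∑ k : Fin m → Fin M, ∏ i, 2 ^ e k i := by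
      simp [B, Fintype.card_sigma, Fintype.card_pi]
    rw [h1]
    have h2 : ∀ k : Fin m → Fin M, ∏ i, 2 ^ e k i = 2 ^ K := by
      intro k; rw [Finset.prod_pow_eq_pow_sum, hesum]
    rw [Finset.sum_congr rfl fun k _ => h2 k, Finset.sum_const, Finset.card_univ]
    simp [mul_comm]
  rw [hcard]
  ring

/-- Tail sum lower bound: for `I` sufficiently large (depending on `d, γ`),
`∑_{∏ j_i > I} ∏ j_i^{-γ-1} ≥ c · I^{-γ} (log I)^{d-1}`. -/
theorem tail_prod_sum_lower (d : ℕ) (hd : 1 ≤ d) (γ : ℝ) (hγ : 0 < γ) :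
    ∃ c > (0:ℝ), ∃ I₀ : ℝ, 2 ≤ I₀ ∧ ∀ I : ℝ, I₀ ≤ I →
      c * I ^ (-γ) * (Real.log I) ^ (d - 1)
        ≤ ∑' j : {j : Fin d → ℕ // (∀ i, 1 ≤ j i) ∧ I < ∏ i, (j i : ℝ)},
            ∏ i, ((j.1 i : ℝ)) ^ (-γ - 1) := by
  obtain ⟨m, rfl⟩ : ∃ m, d = m + 1 := ⟨d - 1, (Nat.succ_pred_eq_of_pos hd).symm⟩
  have hlog2 : (0 : ℝ) < Real.log 2 := Real.log_pos one_lt_two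
  refine ⟨(2 * (m + 1 : ℝ) * Real.log 2)⁻¹ ^ m * (2 : ℝ) ^ (-γ)
      * ((2 : ℝ) ^ (m + 1)) ^ (-γ - 1), ?_, (2 : ℝ) ^ (2 * (m + 1)), ?_, ?_⟩
  · have h1 : (0 : ℝ) < (2 * (m + 1 : ℝ) * Real.log 2)⁻¹ := by positivity
    have h2 : (0 : ℝ) < (2 : ℝ) ^ (-γ) := Real.rpow_pos_of_pos two_pos _
    have h3 : (0 : ℝ) < ((2 : ℝ) ^ (m + 1)) ^ (-γ - 1) :=
      Real.rpow_pos_of_pos (by positivity) _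
    positivity
  · calc (2 : ℝ) = 2 ^ 1 := (pow_one 2).symm
      _ ≤ (2 : ℝ) ^ (2 * (m + 1)) := pow_le_pow_right₀ one_le_two (by omega)
  · intro I hI
    have hI2 : (2 : ℝ) ≤ I := le_trans (by
      calc (2 : ℝ) = 2 ^ 1 := (pow_one 2).symm
        _ ≤ (2 : ℝ) ^ (2 * (m + 1)) := pow_le_pow_right₀ one_le_two (by omega)) hI
    have hIpos : (0 : ℝ) < I := by linarith
    obtain ⟨K, hIK, hK2I, hKd⟩ :
        ∃ K : ℕ, I < (2 : ℝ) ^ K ∧ (2 : ℝ) ^ K ≤ 2 * I ∧ 2 * (m + 1) < K := by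
      set n : ℕ := ⌊I⌋₊ with hn
      have hn1 : 1 ≤ n := Nat.le_floor (by exact_mod_cast (by linarith : (1:ℝ) ≤ I))
      have hnI : (n : ℝ) ≤ I := Nat.floor_le hIpos.le
      have hIn : I < n + 1 := Nat.lt_floor_add_one I
      refine ⟨Nat.log 2 n + 1, ?_, ?_, ?_⟩
      · have h1 : n < 2 ^ (Nat.log 2 n + 1) := Nat.lt_pow_succ_log_self one_lt_two n
        have h2 : ((n : ℝ) + 1) ≤ ((2 ^ (Nat.log 2 n + 1) : ℕ) : ℝ) := by exact_mod_cast h1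
        push_cast at h2
        linarith
      · have h0 : 2 ^ Nat.log 2 n ≤ n := Nat.pow_log_le_self 2 (by omega)
        have h1 : (2 : ℕ) ^ (Nat.log 2 n + 1) ≤ 2 * n := by
          rw [pow_succ]; omega
        have h2 : ((2 : ℕ) ^ (Nat.log 2 n + 1) : ℝ) ≤ 2 * (n : ℝ) := by exact_mod_cast h1
        push_cast at h2
        linarith
      · by_contra hcon
        push_neg at hcon
        have h1 : (2 : ℝ) ^ (Nat.log 2 n + 1) ≤ (2 : ℝ) ^ (2 * (m + 1)) :=
          pow_le_pow_right₀ one_le_two hcon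
        have h2 : n < 2 ^ (Nat.log 2 n + 1) := Nat.lt_pow_succ_log_self one_lt_two n
        have h3 : I < (2 : ℝ) ^ (Nat.log 2 n + 1) := by
          have : ((n : ℝ) + 1) ≤ ((2 ^ (Nat.log 2 n + 1) : ℕ) : ℝ) := by exact_mod_cast h2
          push_cast at this
          linarith
        linarith
    have hKlog : Real.log I ≤ (K : ℝ) * Real.log 2 := by
      calc Real.log I ≤ Real.log ((2 : ℝ) ^ K) := Real.log_le_log hIpos hIK.le
        _ = (K : ℝ) * Real.log 2 := by rw [Real.log_pow]
    obtain ⟨M, hMK, hKM⟩ :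
        ∃ M : ℕ, (m + 1) * M ≤ K ∧ (K : ℝ) ≤ 2 * ((m : ℝ) + 1) * M := by
      refine ⟨K / (m + 1), Nat.mul_div_le K (m + 1), ?_⟩
      have hM1 : 1 ≤ K / (m + 1) := (Nat.one_le_div_iff (by omega)).mpr (by omega)
      have h0 : (m + 1) * (K / (m + 1)) + K % (m + 1) = K := Nat.div_add_mod K (m + 1)
      have h1 : K % (m + 1) < m + 1 := Nat.mod_lt _ (by omega)
      have h3 : m + 1 ≤ (m + 1) * (K / (m + 1)) := Nat.le_mul_of_pos_right _ hM1
      have h4 : K ≤ 2 * ((m + 1) * (K / (m + 1))) := by linarith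
      rw [← mul_assoc] at h4
      exact_mod_cast h4
    have hlogM : Real.log I / (2 * ((m : ℝ) + 1) * Real.log 2) ≤ (M : ℝ) := by
      rw [div_le_iff₀ (by positivity)]
      nlinarith [mul_le_mul_of_nonneg_right hKM hlog2.le]
    have hlogpos : 0 ≤ Real.log I := Real.log_nonneg (by linarith)
    refine le_trans ?_ (core_bound m K M hMK γ I hγ hIK)
    have hfac1 : (Real.log I / (2 * ((m : ℝ) + 1) * Real.log 2)) ^ m ≤ ((M : ℝ)) ^ m :=
      pow_le_pow_left₀ (by positivity) hlogM m
    have hfac2 : (2 : ℝ) ^ (-γ) * ((2 : ℝ) ^ (m + 1)) ^ (-γ - 1) * I ^ (-γ)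
        ≤ (2 : ℝ) ^ K * (((2 : ℝ) ^ (K + (m + 1))) ^ (-γ - 1)) := by
      rw [two_pow_calc K (m + 1) γ]
      have hlhs : (2 : ℝ) ^ (-γ) * ((2 : ℝ) ^ (m + 1)) ^ (-γ - 1) * I ^ (-γ)
          = (2 * I) ^ (-γ) * ((2 : ℝ) ^ (m + 1)) ^ (-γ - 1) := by
        rw [Real.mul_rpow (by norm_num) hIpos.le]
        ring
      rw [hlhs]
      refine mul_le_mul_of_nonneg_right ?_ (Real.rpow_nonneg (by positivity) _)
      exact Real.rpow_le_rpow_of_nonpos (by positivity) hK2I (by linarith)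
    have hrearr : (2 * ((m : ℝ) + 1) * Real.log 2)⁻¹ ^ m * (2 : ℝ) ^ (-γ)
        * ((2 : ℝ) ^ (m + 1)) ^ (-γ - 1) * I ^ (-γ) * (Real.log I) ^ (m + 1 - 1)
        = (Real.log I / (2 * ((m : ℝ) + 1) * Real.log 2)) ^ m
          * ((2 : ℝ) ^ (-γ) * ((2 : ℝ) ^ (m + 1)) ^ (-γ - 1) * I ^ (-γ)) := by
      rw [Nat.add_sub_cancel, div_pow, div_eq_mul_inv, ← inv_pow]
      ring
    rw [hrearr]
    exact mul_le_mul hfac1 hfac2 (by positivity) (by positivity)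
end

section
/- Fix an integer d ≥ 1, reals a ∈ (0,1), k ≥ 1 integer, and set J_a = a^{-1} log(N/σ²) for N/σ² > e. Let 𝓝_d = { j ∈ (ℕ_{>0})^d : ∑_{i=1}^d j_i ≤ J_a + c/a } for a constant c > 0. Then ∑_{j ∉ 𝓝_d} e^{-a k ∑_{i=1}^d j_i} ≤ C a^{-d} (N/σ²)^{-k} (log(N/σ²))^{d-1} for a constant C depending only on d, k, c. -/
open Real
open scoped ENNReal

namespace ExpTailAux

open Classical in
noncomputable def F (b : ℝ) (d : ℕ) (T : ℝ) : ℝ≥0∞ :=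
  ∑' (j : Fin d → ℕ), if (∀ i, 1 ≤ j i) ∧ T < ((∑ i, j i : ℕ) : ℝ) then
    ENNReal.ofReal (Real.exp (-(b * ((∑ i, j i : ℕ) : ℝ)))) else 0

lemma F_zero (b : ℝ) (T : ℝ) : F b 0 T = if T < 0 then 1 else 0 := by
  classical
  rw [F, tsum_eq_single (fun i => 0) (by intro b' hb'; exact absurd (Subsingleton.elim _ _) hb')]
  simp

lemma F_succ (b : ℝ) (d : ℕ) (T : ℝ) :
    F b (d+1) T = ∑' m : ℕ, (if 1 ≤ m then
      ENNReal.ofReal (Real.exp (-(b * m))) * F b d (T - m) else 0) := by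
  classical
  rw [F, ← Equiv.tsum_eq (Fin.consEquiv (fun _ : Fin (d+1) => ℕ)), ENNReal.tsum_prod']
  refine tsum_congr fun m => ?_
  by_cases hm : 1 ≤ m
  · rw [if_pos hm, F, ← ENNReal.tsum_mul_left]
    refine tsum_congr fun v => ?_
    have hsum : (∑ i, ((Fin.consEquiv fun _ : Fin (d+1) => ℕ) (m, v)) i : ℕ) = m + ∑ i, v i := by
      simp [Fin.consEquiv_apply, Fin.sum_cons]
    have hall : (∀ i, 1 ≤ ((Fin.consEquiv fun _ : Fin (d+1) => ℕ) (m, v)) i) ↔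
        (1 ≤ m ∧ ∀ i, 1 ≤ v i) := by
      simp [Fin.consEquiv_apply, Fin.forall_fin_succ]
    simp only [hsum, hall]
    by_cases hv : (∀ i, 1 ≤ v i) ∧ T - m < ((∑ i, v i : ℕ) : ℝ)
    · rw [if_pos ⟨⟨hm, hv.1⟩, by have h2 := hv.2; push_cast at h2 ⊢; linarith⟩, if_pos hv,
        ← ENNReal.ofReal_mul (exp_nonneg _), ← Real.exp_add]
      congr 2
      push_cast
      ring
    · rw [if_neg, if_neg hv, mul_zero]
      rintro ⟨⟨-, h1⟩, h2⟩
      exact hv ⟨h1, by push_cast at h2 ⊢; linarith⟩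
  · rw [if_neg hm]
    refine ENNReal.tsum_eq_zero.2 fun v => ?_
    rw [if_neg]
    rintro ⟨hall, -⟩
    exact hm (by simpa using hall 0)


lemma geom_full (b : ℝ) (hb : 0 < b) {x : ℝ} (hx : 0 ≤ x) :
    ∑' m : ℕ, ENNReal.ofReal (Real.exp (-(b * m)) * x)
      = ENNReal.ofReal ((1 - Real.exp (-b))⁻¹ * x) := by
  have hr0 : (0:ℝ) ≤ Real.exp (-b) := exp_nonneg _
  have hr1 : Real.exp (-b) < 1 := exp_lt_one_iff.2 (by linarith)
  have hgeom : Summable (fun m : ℕ => Real.exp (-b) ^ m * x) :=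
    (summable_geometric_of_lt_one hr0 hr1).mul_right x
  have hexp : ∀ m : ℕ, Real.exp (-(b * m)) = Real.exp (-b) ^ m := by
    intro m
    rw [← Real.exp_nat_mul]
    ring_nf
  simp_rw [hexp]
  rw [← ENNReal.ofReal_tsum_of_nonneg, tsum_mul_right,
    tsum_geometric_of_lt_one hr0 hr1]
  · intro m
    positivity
  · exact hgeom


lemma tail_geom (b : ℝ) (hb : 0 < b) (n : ℕ) :
    ∑' m : ℕ, (if n ≤ m then ENNReal.ofReal (Real.exp (-(b * m))) else 0)
      = ENNReal.ofReal ((1 - Real.exp (-b))⁻¹ * Real.exp (-(b * n))) := by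
  classical
  set f : ℕ → ℝ≥0∞ := fun m => if n ≤ m then ENNReal.ofReal (Real.exp (-(b * m))) else 0 with hf
  rw [← Summable.sum_add_tsum_nat_add' (f := f) (k := n) ENNReal.summable]
  have h1 : ∑ i ∈ Finset.range n, f i = 0 := by
    apply Finset.sum_eq_zero
    intro i hi
    have hni : ¬ n ≤ i := Nat.not_le.2 (Finset.mem_range.1 hi)
    simp only [hf, if_neg hni]
  have h2 : ∀ i : ℕ, f (i + n) = ENNReal.ofReal (Real.exp (-(b * i)) * Real.exp (-(b * n))) := by
    intro i
    rw [hf]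
    simp only [if_pos (by omega : n ≤ i + n)]
    rw [← Real.exp_add]
    congr 2
    push_cast
    ring
  rw [h1, zero_add]
  simp_rw [h2]
  rw [geom_full b hb (exp_nonneg _)]


lemma tail_slide (b S : ℝ) (hb : 0 < b) (hS : 0 ≤ S) :
    ∑' m : ℕ, ENNReal.ofReal (Real.exp (-(b * max ((m:ℝ) - S) 0)))
      ≤ ENNReal.ofReal (S + 2 * (1 - Real.exp (-b))⁻¹) := by
  classical
  have hr0 : (0:ℝ) ≤ Real.exp (-b) := exp_nonneg _
  have hr1 : Real.exp (-b) < 1 := exp_lt_one_iff.2 (by linarith)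
  have hI1 : (1:ℝ) ≤ (1 - Real.exp (-b))⁻¹ := by
    have h01 : 0 < 1 - Real.exp (-b) := by linarith
    have hx : (1 - Real.exp (-b)) * (1 - Real.exp (-b))⁻¹ = 1 := mul_inv_cancel₀ (ne_of_gt h01)
    nlinarith [inv_nonneg.2 (le_of_lt h01)]
  set n : ℕ := ⌊S⌋₊ + 1 with hn
  set f : ℕ → ℝ≥0∞ := fun m => ENNReal.ofReal (Real.exp (-(b * max ((m:ℝ) - S) 0))) with hf
  rw [← Summable.sum_add_tsum_nat_add' (f := f) (k := n) ENNReal.summable]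
  have h1 : ∑ i ∈ Finset.range n, f i ≤ ENNReal.ofReal (S + 1) := by
    calc ∑ i ∈ Finset.range n, f i ≤ ∑ _i ∈ Finset.range n, ENNReal.ofReal 1 := by
          refine Finset.sum_le_sum fun i _ => ?_
          rw [hf]
          refine ENNReal.ofReal_le_ofReal (exp_le_one_iff.2 ?_)
          simp only [neg_nonpos]
          positivity
      _ = ENNReal.ofReal n := by
          rw [Finset.sum_const, Finset.card_range, nsmul_eq_mul]
          rw [ENNReal.ofReal_one, mul_one, ← ENNReal.ofReal_natCast]
      _ ≤ ENNReal.ofReal (S + 1) := by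
          refine ENNReal.ofReal_le_ofReal ?_
          rw [hn]
          push_cast
          have := Nat.floor_le hS
          linarith
  have h2 : ∑' i : ℕ, f (i + n) ≤ ENNReal.ofReal ((1 - Real.exp (-b))⁻¹ * 1) := by
    have hSn : S ≤ (n : ℝ) := by
      rw [hn]; push_cast
      linarith [Nat.lt_floor_add_one S]
    calc ∑' i : ℕ, f (i + n) ≤ ∑' i : ℕ, ENNReal.ofReal (Real.exp (-(b * i)) * 1) := by
          refine ENNReal.tsum_le_tsum fun i => ?_
          rw [hf, mul_one]
          refine ENNReal.ofReal_le_ofReal (exp_le_exp.2 ?_)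
          have h0 : (0:ℝ) ≤ (i:ℝ) + n - S := by push_cast; linarith [Nat.lt_floor_add_one S, Nat.cast_nonneg (α := ℝ) i]
          have : max (((i + n : ℕ):ℝ) - S) 0 = (i:ℝ) + (n:ℝ) - S := by
            rw [max_eq_left]; push_cast; ring
            push_cast; linarith [Nat.lt_floor_add_one S, Nat.cast_nonneg (α := ℝ) i]
          rw [this]
          have : (0:ℝ) ≤ b := le_of_lt hb
          nlinarith [Nat.cast_nonneg (α := ℝ) i]
      _ = ENNReal.ofReal ((1 - Real.exp (-b))⁻¹ * 1) := geom_full b hb (by norm_num)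
  calc ∑ i ∈ Finset.range n, f i + ∑' i, f (i + n)
      ≤ ENNReal.ofReal (S + 1) + ENNReal.ofReal ((1 - Real.exp (-b))⁻¹ * 1) :=
        add_le_add h1 h2
    _ ≤ ENNReal.ofReal (S + 2 * (1 - Real.exp (-b))⁻¹) := by
        rw [← ENNReal.ofReal_add (by linarith) (by linarith)]
        refine ENNReal.ofReal_le_ofReal (by linarith)


lemma max_shift {T x : ℝ} (hx : 0 ≤ x) :
    x + max (T - x) 0 = max T 0 + max (x - max T 0) 0 := by
  rcases le_total T x with h2 | h2
  · have h1 : max (T - x) 0 = 0 := max_eq_right (by linarith)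
    rcases le_total T 0 with h | h
    · have h3 : max T 0 = 0 := max_eq_right h
      have h4 : max (x - 0) 0 = x := by rw [sub_zero, max_eq_left hx]
      rw [h1, h3, h4]; ring
    · have h3 : max T 0 = T := max_eq_left h
      have h4 : max (x - T) 0 = x - T := max_eq_left (by linarith)
      rw [h1, h3, h4]; ring
  · have h : 0 ≤ T := le_trans hx h2
    have h3 : max T 0 = T := max_eq_left h
    have h4 : max (T - x) 0 = T - x := max_eq_left (by linarith)
    have h5 : max (x - T) 0 = 0 := max_eq_right (by linarith)
    rw [h3, h4, h5]; ring

lemma F_bound (b : ℝ) (hb : 0 < b) (d : ℕ) (T : ℝ) :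
    F b (d+1) T ≤ ENNReal.ofReal (2^d * ((1 - Real.exp (-b))⁻¹)^(d+1)
      * (Real.exp (-(b * max T 0)) * (1 + b * max T 0)^d)) := by
  have hr0 : (0:ℝ) ≤ Real.exp (-b) := exp_nonneg _
  have hr1 : Real.exp (-b) < 1 := exp_lt_one_iff.2 (by linarith)
  have h01 : (0:ℝ) < 1 - Real.exp (-b) := by linarith
  have hI0 : (0:ℝ) ≤ (1 - Real.exp (-b))⁻¹ := inv_nonneg.2 h01.le
  have hbr : 1 - Real.exp (-b) ≤ b := by nlinarith [add_one_le_exp (-b)]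
  have hIb : (1:ℝ) ≤ (1 - Real.exp (-b))⁻¹ * b := by
    have h1 := mul_le_mul_of_nonneg_left hbr hI0
    rw [inv_mul_cancel₀ h01.ne'] at h1
    exact h1
  induction d generalizing T with
  | zero =>
    have hS : 0 ≤ max T 0 := le_max_right T 0
    rw [F_succ]
    have hcong : ∀ m : ℕ, (if 1 ≤ m then
        ENNReal.ofReal (Real.exp (-(b * m))) * F b 0 (T - m) else 0)
        = (if ⌊max T 0⌋₊ + 1 ≤ m then ENNReal.ofReal (Real.exp (-(b * m))) else 0) := by
      intro m
      by_cases h : ⌊max T 0⌋₊ + 1 ≤ m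
      · have hm : 1 ≤ m := by omega
        have hmT : max T 0 < (m:ℝ) := (Nat.floor_lt hS).1 (by omega)
        have hT : T - m < 0 := by
          have := lt_of_le_of_lt (le_max_left T 0) hmT
          linarith
        rw [if_pos hm, if_pos h, F_zero, if_pos hT, mul_one]
      · rw [if_neg h]
        by_cases hm : 1 ≤ m
        · rw [if_pos hm, F_zero, if_neg, mul_zero]
          intro hT
          have h0m : (0:ℝ) < m := by exact_mod_cast hm
          have h0 : max T 0 < (m:ℝ) := max_lt_iff.2 ⟨by linarith, h0m⟩
          have := (Nat.floor_lt hS).2 h0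
          omega
        · rw [if_neg hm]
    rw [tsum_congr hcong, tail_geom b hb]
    apply ENNReal.ofReal_le_ofReal
    have hn : max T 0 ≤ ((⌊max T 0⌋₊ + 1 : ℕ):ℝ) := by
      push_cast
      linarith [Nat.lt_floor_add_one (max T 0)]
    have hexp : Real.exp (-(b * ((⌊max T 0⌋₊ + 1 : ℕ):ℝ))) ≤ Real.exp (-(b * max T 0)) := by
      apply exp_le_exp.2
      nlinarith
    calc (1 - Real.exp (-b))⁻¹ * Real.exp (-(b * ((⌊max T 0⌋₊ + 1 : ℕ):ℝ)))
        ≤ (1 - Real.exp (-b))⁻¹ * Real.exp (-(b * max T 0)) :=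
          mul_le_mul_of_nonneg_left hexp hI0
      _ = 2^0 * ((1 - Real.exp (-b))⁻¹)^(0+1) * (Real.exp (-(b * max T 0)) * (1 + b * max T 0)^0) := by
          ring
  | succ e ih =>
    have hS : 0 ≤ max T 0 := le_max_right T 0
    rw [F_succ]
    set S := max T 0 with hSdef
    set I := (1 - Real.exp (-b))⁻¹ with hIdef
    set C₁ : ℝ := 2^e * I^(e+1) * (Real.exp (-(b*S)) * (1+b*S)^e) with hC₁
    have hC₁0 : 0 ≤ C₁ := by
      rw [hC₁]
      have : 0 ≤ 1 + b * S := by nlinarith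
      positivity
    calc ∑' m : ℕ, (if 1 ≤ m then
          ENNReal.ofReal (Real.exp (-(b * m))) * F b (e+1) (T - m) else 0)
        ≤ ∑' m : ℕ, ENNReal.ofReal (C₁ * Real.exp (-(b * max ((m:ℝ) - S) 0))) := by
          refine ENNReal.tsum_le_tsum fun m => ?_
          by_cases hm : 1 ≤ m
          · rw [if_pos hm]
            refine le_trans (mul_le_mul_right (ih (T - m)) _) ?_
            rw [← ENNReal.ofReal_mul (exp_nonneg _)]
            refine ENNReal.ofReal_le_ofReal ?_
            set S' := max (T - (m:ℝ)) 0 with hS'def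
            have hS'0 : 0 ≤ S' := le_max_right _ _
            have hS'S : S' ≤ S := by
              apply max_le_max _ le_rfl
              have : (0:ℝ) ≤ m := Nat.cast_nonneg m
              linarith
            have hms : (m:ℝ) + S' = S + max ((m:ℝ) - S) 0 := by
              rw [hS'def, hSdef]
              exact max_shift (Nat.cast_nonneg m)
            have hexp : Real.exp (-(b * m)) * Real.exp (-(b * S'))
                = Real.exp (-(b*S)) * Real.exp (-(b * max ((m:ℝ) - S) 0)) := by
              rw [← Real.exp_add, ← Real.exp_add]
              congr 1
              linear_combination (-b) * hms
            have hpow : (1 + b*S')^e ≤ (1 + b*S)^e := by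
              apply pow_le_pow_left₀ (by nlinarith) (by nlinarith)
            calc Real.exp (-(b * m)) * (2^e * I^(e+1) * (Real.exp (-(b*S')) * (1+b*S')^e))
                = (2^e * I^(e+1)) * ((Real.exp (-(b * m)) * Real.exp (-(b*S'))) * (1+b*S')^e) := by
                  ring
              _ = (2^e * I^(e+1)) * ((Real.exp (-(b*S)) * Real.exp (-(b * max ((m:ℝ) - S) 0))) * (1+b*S')^e) := by
                  rw [hexp]
              _ ≤ (2^e * I^(e+1)) * ((Real.exp (-(b*S)) * Real.exp (-(b * max ((m:ℝ) - S) 0))) * (1+b*S)^e) := by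
                  gcongr
              _ = C₁ * Real.exp (-(b * max ((m:ℝ) - S) 0)) := by
                  rw [hC₁]; ring
          · rw [if_neg hm]
            exact zero_le
      _ = ENNReal.ofReal C₁ * ∑' m : ℕ, ENNReal.ofReal (Real.exp (-(b * max ((m:ℝ) - S) 0))) := by
          rw [← ENNReal.tsum_mul_left]
          exact tsum_congr fun m => ENNReal.ofReal_mul hC₁0
      _ ≤ ENNReal.ofReal C₁ * ENNReal.ofReal (S + 2 * I) :=
          mul_le_mul_right (tail_slide b S hb hS) _
      _ ≤ ENNReal.ofReal (2^(e+1) * I^(e+1+1) * (Real.exp (-(b * S)) * (1 + b * S)^(e+1))) := by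
          rw [← ENNReal.ofReal_mul hC₁0]
          apply ENNReal.ofReal_le_ofReal
          have key : S + 2*I ≤ 2*I*(1+b*S) := by nlinarith
          calc C₁ * (S + 2*I) ≤ C₁ * (2*I*(1+b*S)) := mul_le_mul_of_nonneg_left key hC₁0
            _ = 2^(e+1) * I^(e+1+1) * (Real.exp (-(b * S)) * (1 + b * S)^(e+1)) := by
              rw [hC₁]; ring


end ExpTailAux

/-- Exponential tail bound in dimension `d`: with `J_a = a⁻¹ log(N/σ²)` and the set
`𝓝_d = {j : ∑ j_i ≤ J_a + c/a}`, one has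
`∑_{j ∉ 𝓝_d} e^{-ak ∑ j_i} ≤ C a^{-d} (N/σ²)^{-k} (log(N/σ²))^{d-1}`. -/
theorem exp_tail_multidim (d k : ℕ) (hd : 1 ≤ d) (hk : 1 ≤ k) (c : ℝ) (hc : 0 < c) :
    ∃ C > (0:ℝ), ∀ a ∈ Set.Ioo (0:ℝ) 1, ∀ N σsq : ℝ, 0 < σsq →
      Real.exp 1 < N / σsq →
      (∑' j : {j : Fin d → ℕ // (∀ i, 1 ≤ j i) ∧
            a⁻¹ * Real.log (N / σsq) + c / a < ∑ i, (j i : ℝ)},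
          Real.exp (-(a * k * ∑ i, (j.1 i : ℝ))))
        ≤ C * a ^ (-(d : ℝ)) * (N / σsq) ^ (-(k : ℝ)) *
            (Real.log (N / σsq)) ^ (d - 1) := by
  classical
  obtain ⟨e, rfl⟩ : ∃ e, d = e + 1 := ⟨d - 1, by omega⟩
  have hk0 : (0:ℝ) < (k:ℝ) := by exact_mod_cast hk
  refine ⟨2^e * Real.exp 1 ^ (e+1) * (1 + (k:ℝ) + k*c)^e, by positivity, ?_⟩
  intro a ha N σsq hσ hN
  obtain ⟨ha0, ha1⟩ := ha
  set R := N / σsq with hR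
  have hR0 : (0:ℝ) < R := lt_trans (exp_pos 1) hN
  have hL : 1 < Real.log R := (Real.lt_log_iff_exp_lt hR0).2 hN
  set L := Real.log R with hLdef
  set T := a⁻¹ * L + c / a with hT
  have hT0 : 0 < T := by positivity
  set b := a * (k:ℝ) with hb
  have hb0 : 0 < b := by positivity
  -- identify the tsum with F
  set P : (Fin (e+1) → ℕ) → Prop := fun j => (∀ i, 1 ≤ j i) ∧ T < ∑ i, (j i : ℝ) with hP
  set f : (Fin (e+1) → ℕ) → ℝ≥0∞ :=
    fun j => ENNReal.ofReal (Real.exp (-(a * k * ∑ i, (j i : ℝ)))) with hfdef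
  have hsubty : ∑' (j : {j // P j}), f j.1 = ∑' j, Set.indicator {j | P j} f j :=
    tsum_subtype {j | P j} f
  have hind : ∑' j, Set.indicator {j | P j} f j = ExpTailAux.F b (e+1) T := by
    rw [ExpTailAux.F]
    refine tsum_congr fun j => ?_
    have hcast : ((∑ i, j i : ℕ) : ℝ) = ∑ i, (j i : ℝ) := by push_cast; rfl
    have hval : f j = ENNReal.ofReal (Real.exp (-(b * ((∑ i, j i : ℕ) : ℝ)))) := by
      rw [hfdef, hcast, hb]
    by_cases h : P j
    · rw [Set.indicator_of_mem (show j ∈ {j | P j} from h), hval,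
        if_pos ⟨h.1, by rw [hcast]; exact h.2⟩]
    · rw [Set.indicator_of_notMem (show j ∉ {j | P j} from h), if_neg]
      rintro ⟨h1, h2⟩
      rw [hcast] at h2
      exact h ⟨h1, h2⟩
  -- the ENNReal bound
  have hmax : max T 0 = T := max_eq_left hT0.le
  have hbound : ∑' (j : {j // P j}), f j.1
      ≤ ENNReal.ofReal (2^e * ((1 - Real.exp (-b))⁻¹)^(e+1)
        * (Real.exp (-(b * T)) * (1 + b * T)^e)) := by
    rw [hsubty, hind]
    have := ExpTailAux.F_bound b hb0 e T
    rwa [hmax] at this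
  set Y : ℝ := 2^e * ((1 - Real.exp (-b))⁻¹)^(e+1) * (Real.exp (-(b * T)) * (1 + b * T)^e)
    with hY
  have hY0 : 0 ≤ Y := by
    have h1 : Real.exp (-b) < 1 := exp_lt_one_iff.2 (by linarith)
    have h2 : (0:ℝ) < 1 - Real.exp (-b) := by linarith
    have h3 : 0 ≤ 1 + b * T := by have := mul_pos hb0 hT0; linarith
    positivity
  -- pass to real numbers
  have hreal : (∑' j : {j // P j}, Real.exp (-(a * k * ∑ i, (j.1 i : ℝ)))) ≤ Y := by
    have h1 : (∑' (j : {j // P j}), f j.1).toReal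
        = ∑' j : {j // P j}, Real.exp (-(a * k * ∑ i, (j.1 i : ℝ))) := by
      rw [ENNReal.tsum_toReal_eq (fun _ => ENNReal.ofReal_ne_top)]
      exact tsum_congr fun j => ENNReal.toReal_ofReal (exp_nonneg _)
    rw [← h1, ← ENNReal.toReal_ofReal hY0]
    exact ENNReal.toReal_mono ENNReal.ofReal_ne_top hbound
  refine le_trans hreal ?_
  -- now the purely real estimate
  have hbT : b * T = k * L + k * c := by
    rw [hb, hT]
    field_simp
  clear_value P f b T L R
  have hexpbT : Real.exp (-(b * T)) ≤ R ^ (-(k:ℝ)) := by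
    rw [hbT, Real.rpow_def_of_pos hR0]
    have : Real.log R * (-(k:ℝ)) = -(k * L) := by rw [hLdef]; ring
    rw [this]
    calc Real.exp (-(k * L + k * c)) = Real.exp (-(k * L)) * Real.exp (-(k * c)) := by
          rw [← Real.exp_add]; ring_nf
      _ ≤ Real.exp (-(k * L)) * 1 := by
          apply mul_le_mul_of_nonneg_left _ (exp_nonneg _)
          apply exp_le_one_iff.2
          nlinarith
      _ = Real.exp (-(k * L)) := mul_one _
  have hI : ((1 - Real.exp (-b))⁻¹) ≤ Real.exp 1 / a := by
    have hk1 : (1:ℝ) ≤ (k:ℝ) := by exact_mod_cast hk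
    have hba : a ≤ b := by
      rw [hb]
      nlinarith
    have h1 : Real.exp (-b) ≤ Real.exp (-a) := exp_le_exp.2 (by linarith)
    have hprod : Real.exp (-a) * Real.exp a = 1 := by rw [← Real.exp_add]; simp
    have h2 : Real.exp (-a) * (a + 1) ≤ 1 := by
      calc Real.exp (-a) * (a + 1) ≤ Real.exp (-a) * Real.exp a :=
            mul_le_mul_of_nonneg_left (add_one_le_exp a) (exp_nonneg _)
        _ = 1 := hprod
    have h3 : Real.exp (-1) ≤ Real.exp (-a) := exp_le_exp.2 (by linarith)
    have h4 : a * Real.exp (-1) ≤ 1 - Real.exp (-b) := by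
      have hm := mul_le_mul_of_nonneg_left h3 ha0.le
      nlinarith [h1, h2]
    have h5 : (0:ℝ) < a * Real.exp (-1) := by positivity
    calc (1 - Real.exp (-b))⁻¹ ≤ (a * Real.exp (-1))⁻¹ := by
          apply inv_anti₀ h5 h4
      _ = Real.exp 1 / a := by
          rw [mul_inv, Real.exp_neg, inv_inv]
          ring
  have hIpos : (0:ℝ) < (1 - Real.exp (-b))⁻¹ := by
    have h1 : Real.exp (-b) < 1 := exp_lt_one_iff.2 (by linarith)
    have h2 : (0:ℝ) < 1 - Real.exp (-b) := by linarith
    positivity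
  have hpoly : (1 + b * T)^e ≤ (1 + (k:ℝ) + k*c)^e * L^e := by
    rw [← mul_pow]
    apply pow_le_pow_left₀ (by have := mul_pos hb0 hT0; linarith)
    rw [hbT]
    have hkc : 0 ≤ (k:ℝ) * c := by positivity
    nlinarith [mul_le_mul_of_nonneg_left hL.le hkc]
  have hrpowk : (0:ℝ) ≤ R ^ (-(k:ℝ)) := Real.rpow_nonneg hR0.le _
  calc Y ≤ 2^e * (Real.exp 1 / a)^(e+1) * (R ^ (-(k:ℝ)) * ((1 + (k:ℝ) + k*c)^e * L^e)) := by
        rw [hY]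
        have h1bT : (0:ℝ) ≤ 1 + b*T := by have := mul_pos hb0 hT0; linarith
        have hfac1 : ((1 - Real.exp (-b))⁻¹)^(e+1) ≤ (Real.exp 1 / a)^(e+1) :=
          pow_le_pow_left₀ hIpos.le hI _
        have hfac2 : Real.exp (-(b*T)) * (1+b*T)^e
            ≤ R^(-(k:ℝ)) * ((1+(k:ℝ)+k*c)^e * L^e) := by
          apply mul_le_mul hexpbT hpoly (by positivity) hrpowk
        apply mul_le_mul _ hfac2 (by positivity) (by positivity)
        exact mul_le_mul_of_nonneg_left hfac1 (by positivity)
    _ = 2^e * Real.exp 1 ^ (e+1) * (1 + (k:ℝ) + k*c)^e * a ^ (-((e+1:ℕ) : ℝ)) *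
          R ^ (-(k:ℝ)) * L^(e+1-1) := by
        have hae : a ^ (-((e+1:ℕ) : ℝ)) = (a⁻¹)^(e+1) := by
          rw [Real.rpow_neg ha0.le, Real.rpow_natCast, inv_pow]
        rw [hae, Nat.add_sub_cancel, div_pow, div_eq_mul_inv, ← inv_pow]
        ring
end

section
/- Let μ_j = e^{-a ∑_{i=1}^d j_i} for j ∈ (ℕ_{>0})^d with a ∈ (0,1), and let ν_j = Nμ_j/(σ² + Nμ_j) with N/σ² > e^{d+1}. Then for every integer k ≥ 1, ∑_{j ∈ (ℕ_{>0})^d} ν_j^k is bounded above and below by constant multiples (depending only on d and k) of (a^{-1} log(N/σ²))^d. -/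
open Real

lemma geom_pnat {x : ℝ} (h0 : 0 ≤ x) (h1 : x < 1) :
    Summable (fun n : ℕ+ => x ^ (n : ℕ)) ∧
      (∑' n : ℕ+, x ^ (n : ℕ)) = x * (1 - x)⁻¹ := by
  have hcomp : (fun n : ℕ+ => x ^ (n : ℕ)) ∘ (Equiv.pnatEquivNat.symm) =
      fun n : ℕ => x * x ^ n := by
    funext n
    simp only [Function.comp_apply, Equiv.pnatEquivNat_symm_apply, Nat.succPNat_coe]
    rw [pow_succ, mul_comm]
  have hs : Summable (fun n : ℕ => x * x ^ n) :=
    (summable_geometric_of_lt_one h0 h1).mul_left x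
  have hsum : Summable (fun n : ℕ+ => x ^ (n : ℕ)) := by
    rw [← Equiv.summable_iff Equiv.pnatEquivNat.symm, hcomp]; exact hs
  refine ⟨hsum, ?_⟩
  rw [← Equiv.tsum_eq Equiv.pnatEquivNat.symm]
  have : ∀ n : ℕ, x ^ ((Equiv.pnatEquivNat.symm n : ℕ+) : ℕ) = x * x ^ n := by
    intro n
    simpa using congrFun hcomp n
  rw [tsum_congr this, tsum_mul_left, tsum_geometric_of_lt_one h0 h1]

lemma pi_summable_tsum (f : ℕ+ → ℝ) (h0 : ∀ n, 0 ≤ f n) (hf : Summable f) :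
    ∀ d : ℕ, Summable (fun j : Fin d → ℕ+ => ∏ i, f (j i)) ∧
      (∑' j : Fin d → ℕ+, ∏ i, f (j i)) = (∑' n, f n) ^ d := by
  intro d
  induction d with
  | zero =>
    constructor
    · exact .of_finite
    · rw [tsum_eq_single (fun i => i.elim0) (fun b hb => absurd (Subsingleton.elim b _) hb)]
      simp
  | succ n ih =>
    obtain ⟨ihs, iht⟩ := ih
    let e := (Fin.consEquiv (fun _ : Fin (n+1) => ℕ+))
    have key : ∀ p : ℕ+ × (Fin n → ℕ+),
        (∏ i, f (e p i)) = f p.1 * ∏ i, f (p.2 i) := by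
      rintro ⟨b, c⟩
      rw [Fin.prod_univ_succ]
      simp [e, Fin.consEquiv_apply]
    have hprod : Summable (fun p : ℕ+ × (Fin n → ℕ+) => f p.1 * ∏ i, f (p.2 i)) := by
      apply Summable.mul_of_nonneg hf ihs
      · intro n; exact h0 n
      · intro j; exact Finset.prod_nonneg fun i _ => h0 _
    have hcomp : (fun j : Fin (n+1) → ℕ+ => ∏ i, f (j i)) ∘ e =
        fun p : ℕ+ × (Fin n → ℕ+) => f p.1 * ∏ i, f (p.2 i) := funext key
    have hsum : Summable (fun j : Fin (n+1) → ℕ+ => ∏ i, f (j i)) := by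
      rw [← Equiv.summable_iff e, hcomp]; exact hprod
    refine ⟨hsum, ?_⟩
    rw [← Equiv.tsum_eq e, tsum_congr key,
      Summable.tsum_prod' hprod (fun b => ihs.mul_left (f b))]
    simp_rw [tsum_mul_left, iht]
    rw [tsum_mul_right, pow_succ, mul_comm]

lemma min_one_le_rpow {x t : ℝ} (hx : 0 ≤ x) (ht0 : 0 < t) (ht1 : t ≤ 1) :
    min 1 x ≤ x ^ t := by
  rcases le_or_gt x 1 with h | h
  · rcases eq_or_lt_of_le hx with h0 | h0
    · simp [← h0, Real.zero_rpow ht0.ne']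
    · calc min 1 x ≤ x := min_le_right _ _
        _ = x ^ (1:ℝ) := (Real.rpow_one x).symm
        _ ≤ x ^ t := Real.rpow_le_rpow_of_exponent_ge h0 h ht1
  · calc min 1 x ≤ 1 := min_le_left _ _
      _ ≤ x ^ t := Real.one_le_rpow h.le ht0.le

set_option maxHeartbeats 1000000 in
/-- For exponentially decaying eigenvalues `μ_j = e^{-a ∑ j_i}` and
`ν_j = Nμ_j/(σ² + Nμ_j)`, for each `k ≥ 1`,
`∑_j ν_j^k ≍ (a⁻¹ log(N/σ²))^d` with constants depending only on `d, k`. -/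
theorem nu_sum_exponential (d k : ℕ) (hd : 1 ≤ d) (hk : 1 ≤ k) :
    ∃ c₁ > (0:ℝ), ∃ c₂ > (0:ℝ), ∀ a ∈ Set.Ioo (0:ℝ) 1, ∀ N σsq : ℝ, 0 < σsq →
      Real.exp (d + 1) < N / σsq →
      c₁ * (a⁻¹ * Real.log (N / σsq)) ^ d ≤
        (∑' j : Fin d → ℕ+,
          (N * Real.exp (-(a * ∑ i, ((j i : ℕ) : ℝ))) /
            (σsq + N * Real.exp (-(a * ∑ i, ((j i : ℕ) : ℝ))))) ^ k) ∧
      (∑' j : Fin d → ℕ+,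
          (N * Real.exp (-(a * ∑ i, ((j i : ℕ) : ℝ))) /
            (σsq + N * Real.exp (-(a * ∑ i, ((j i : ℕ) : ℝ))))) ^ k)
        ≤ c₂ * (a⁻¹ * Real.log (N / σsq)) ^ d := by
  have hd0 : (0:ℝ) < d := by exact_mod_cast hd
  refine ⟨(1/2)^k / ((d:ℝ)*((d:ℝ)+1))^d,
    div_pos (pow_pos (by norm_num) k) (pow_pos (mul_pos hd0 (by linarith)) d),
    (Real.exp 1 / d)^d, pow_pos (div_pos (Real.exp_pos 1) hd0) d, ?_⟩
  rintro a ⟨ha0, ha1⟩ N σsq hσ hR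
  set νk : (Fin d → ℕ+) → ℝ := fun j =>
    (N * Real.exp (-(a * ∑ i, ((j i : ℕ) : ℝ))) /
      (σsq + N * Real.exp (-(a * ∑ i, ((j i : ℕ) : ℝ))))) ^ k with hνkdef
  set L := Real.log (N / σsq) with hLdef
  -- basic positivity facts
  have hRpos : (0:ℝ) < N / σsq := lt_trans (Real.exp_pos _) hR
  have hN : 0 < N := by
    rcases div_pos_iff.mp hRpos with ⟨h1, _⟩ | ⟨_, h2⟩
    · exact h1
    · linarith
  have hLgt : (d:ℝ) + 1 < L := by
    have := Real.log_lt_log (Real.exp_pos _) hR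
    rwa [Real.log_exp] at this
  have hL0 : 0 < L := by linarith
  have hainv : 1 < a⁻¹ := (one_lt_inv₀ ha0).mpr ha1
  -- abbreviations
  set s : (Fin d → ℕ+) → ℝ := fun j => ∑ i, ((j i : ℕ) : ℝ) with hsdef
  have hs0 : ∀ j, 0 ≤ s j := fun j => Finset.sum_nonneg fun i _ => by positivity
  have hden : ∀ j, 0 < σsq + N * Real.exp (-(a * s j)) := fun j => by positivity
  have hνk_eq : ∀ j, νk j =
      (N * Real.exp (-(a * s j)) / (σsq + N * Real.exp (-(a * s j)))) ^ k := fun j => rfl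
  have hνk0 : ∀ j, 0 ≤ νk j := fun j => by
    rw [hνk_eq]; positivity
  have hν1 : ∀ j, N * Real.exp (-(a * s j)) / (σsq + N * Real.exp (-(a * s j))) ≤ 1 :=
    fun j => (div_le_one (hden j)).mpr (by nlinarith [Real.exp_pos (-(a * s j))])
  have hν0 : ∀ j, 0 ≤ N * Real.exp (-(a * s j)) / (σsq + N * Real.exp (-(a * s j))) :=
    fun j => by positivity
  -- the exponent t and geometric ratio x
  set t := (d : ℝ) / L with htdef
  have ht0 : 0 < t := div_pos hd0 hL0
  have ht1 : t < 1 := (div_lt_one hL0).mpr (by linarith)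
  set x := Real.exp (-(t * a)) with hxdef
  have hx0 : 0 < x := Real.exp_pos _
  have hx1 : x < 1 := Real.exp_lt_one_iff.mpr (by nlinarith)
  -- pointwise upper bound
  have hpoint : ∀ j, νk j ≤ Real.exp d * ∏ i, x ^ ((j i : ℕ)) := by
    intro j
    have h1 : νk j ≤ N * Real.exp (-(a * s j)) / (σsq + N * Real.exp (-(a * s j))) := by
      rw [hνk_eq]
      exact pow_le_of_le_one (hν0 j) (hν1 j) (by omega)
    have h2 : N * Real.exp (-(a * s j)) / (σsq + N * Real.exp (-(a * s j)))
        ≤ min 1 ((N / σsq) * Real.exp (-(a * s j))) := by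
      refine le_min (hν1 j) ?_
      rw [div_mul_eq_mul_div, div_le_div_iff₀ (hden j) hσ]
      nlinarith [mul_pos hN (Real.exp_pos (-(a * s j))), sq_nonneg (N * Real.exp (-(a * s j)))]
    have h3 : min 1 ((N / σsq) * Real.exp (-(a * s j)))
        ≤ ((N / σsq) * Real.exp (-(a * s j))) ^ (t : ℝ) :=
      min_one_le_rpow (by positivity) ht0 ht1.le
    have h4 : ((N / σsq) * Real.exp (-(a * s j))) ^ (t : ℝ)
        = Real.exp d * ∏ i, x ^ ((j i : ℕ)) := by
      rw [Real.mul_rpow hRpos.le (Real.exp_pos _).le]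
      congr 1
      · rw [Real.rpow_def_of_pos hRpos, ← hLdef, htdef]
        congr 1
        field_simp
      · rw [Real.rpow_def_of_pos (Real.exp_pos _), Real.log_exp]
        have : ∀ i, x ^ ((j i : ℕ)) = Real.exp (((j i : ℕ) : ℝ) * (-(t * a))) := by
          intro i; rw [Real.exp_nat_mul]
        rw [Finset.prod_congr rfl (fun i _ => this i), ← Real.exp_sum, ← Finset.sum_mul]
        congr 1
        rw [hsdef]
        ring
    calc νk j ≤ _ := h1
      _ ≤ _ := h2
      _ ≤ _ := h3
      _ = _ := h4
  -- summability machinery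
  obtain ⟨hgs, hgt⟩ := pi_summable_tsum (fun n : ℕ+ => x ^ (n : ℕ))
    (fun n => by positivity) (geom_pnat hx0.le hx1).1 d
  have hmaj : Summable (fun j : Fin d → ℕ+ => Real.exp d * ∏ i, x ^ ((j i : ℕ))) :=
    hgs.mul_left _
  have hsummable : Summable νk := Summable.of_nonneg_of_le hνk0 hpoint hmaj
  constructor
  · -- LOWER BOUND
    set J := a⁻¹ * L with hJdef
    have hJgt : (d:ℝ) + 1 < J := by
      have : L < J := by
        rw [hJdef]; nlinarith
      linarith
    have hJ0 : 0 < J := by linarith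
    set m := ⌊J / d⌋₊ with hmdef
    have hm1 : 1 ≤ m := by
      apply Nat.le_floor
      rw [Nat.cast_one, le_div_iff₀ hd0, one_mul]
      linarith
    have hmle : (m : ℝ) ≤ J / d := Nat.floor_le (by positivity)
    have hmgt : J / d - 1 < (m:ℝ) := Nat.sub_one_lt_floor _
    set S := Fintype.piFinset (fun _ : Fin d => Finset.Icc (1:ℕ+) ⟨m, hm1⟩) with hSdef
    have hcard : S.card = m ^ d := by
      simp [hSdef, Fintype.card_piFinset, PNat.card_Icc]
      exact congrArg (· ^ d) ((PNat.card_Icc (1:ℕ+) ⟨m, hm1⟩).trans (by simp))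
    have hsS : ∀ j ∈ S, a * s j ≤ L := by
      intro j hj
      have hle : ∀ i, ((j i : ℕ) : ℝ) ≤ m := by
        intro i
        have := (Fintype.mem_piFinset.mp hj) i
        have h2 := (Finset.mem_Icc.mp this).2
        exact_mod_cast (PNat.coe_le_coe _ _).mpr h2
      have h1 : s j ≤ d * m := by
        rw [hsdef]
        calc ∑ i, ((j i : ℕ) : ℝ) ≤ ∑ _i : Fin d, (m:ℝ) :=
              Finset.sum_le_sum fun i _ => hle i
          _ = d * m := by simp [Finset.sum_const, mul_comm]
      have h2 : (d:ℝ) * m ≤ J := by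
        rw [mul_comm]
        calc (m:ℝ) * d ≤ (J / d) * d := by gcongr
          _ = J := by field_simp
      have h3 : a * J = L := by
        rw [hJdef, ← mul_assoc, mul_inv_cancel₀ ha0.ne', one_mul]
      nlinarith [hs0 j]
    have hhalf : ∀ j ∈ S, (1/2:ℝ)^k ≤ νk j := by
      intro j hj
      have hNμ : σsq ≤ N * Real.exp (-(a * s j)) := by
        have h1 : Real.exp (-L) ≤ Real.exp (-(a * s j)) :=
          Real.exp_le_exp.mpr (by linarith [hsS j hj])
        have h2 : Real.exp (-L) = σsq / N := by
          rw [hLdef, Real.exp_neg, Real.exp_log hRpos, inv_div]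
        rw [h2] at h1
        calc σsq = N * (σsq / N) := by field_simp
          _ ≤ N * Real.exp (-(a * s j)) := by gcongr
      have hν_half : (1/2:ℝ) ≤ N * Real.exp (-(a * s j)) / (σsq + N * Real.exp (-(a * s j))) := by
        rw [le_div_iff₀ (hden j)]
        nlinarith
      rw [hνk_eq]
      exact pow_le_pow_left₀ (by norm_num) hν_half k
    have hsum_lb : (1/2:ℝ)^k * (m:ℝ)^d ≤ ∑' j, νk j := by
      have h1 : (S.card : ℝ) * (1/2:ℝ)^k ≤ ∑ j ∈ S, νk j := by
        have := Finset.card_nsmul_le_sum S νk ((1/2:ℝ)^k) hhalf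
        rwa [nsmul_eq_mul] at this
      have h2 : ∑ j ∈ S, νk j ≤ ∑' j, νk j :=
        Summable.sum_le_tsum S (fun j _ => hνk0 j) hsummable
      have h3 : (S.card : ℝ) = (m:ℝ)^d := by rw [hcard]; push_cast; ring
      calc (1/2:ℝ)^k * (m:ℝ)^d = (S.card : ℝ) * (1/2:ℝ)^k := by rw [h3]; ring
        _ ≤ ∑ j ∈ S, νk j := h1
        _ ≤ ∑' j, νk j := h2
    have hm_lb : J / ((d:ℝ) * ((d:ℝ)+1)) ≤ (m:ℝ) := by
      have key : J / ((d:ℝ) * ((d:ℝ)+1)) ≤ J / d - 1 := by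
        rw [div_sub_one hd0.ne']
        rw [div_le_div_iff₀ (by positivity) hd0]
        nlinarith [mul_nonneg (mul_nonneg hd0.le hd0.le) (sub_nonneg.mpr hJgt.le)]
      linarith
    calc (1/2:ℝ)^k / ((d:ℝ)*((d:ℝ)+1))^d * (a⁻¹ * L) ^ d
        = (1/2:ℝ)^k * (J / ((d:ℝ)*((d:ℝ)+1)))^d := by
          rw [div_pow, hJdef]; ring
      _ ≤ (1/2:ℝ)^k * (m:ℝ)^d := by
          gcongr
      _ ≤ ∑' j, νk j := hsum_lb
  · -- UPPER BOUND
    have hta : 0 < t * a := mul_pos ht0 ha0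
    have hxE : x * Real.exp (t * a) = 1 := by
      rw [hxdef, ← Real.exp_add]
      simp
    have hgeom_le : x * (1 - x)⁻¹ ≤ (t * a)⁻¹ := by
      have hE := Real.add_one_le_exp (t * a)
      have h1x : 0 < 1 - x := by linarith
      rw [← div_eq_mul_inv, div_le_iff₀ h1x]
      have hkey : (t * a + 1) * x ≤ 1 := by nlinarith
      have hinv : (t * a) * (t * a)⁻¹ = 1 := mul_inv_cancel₀ hta.ne'
      nlinarith
    have htsum_le : ∑' j, νk j ≤ Real.exp d * (x * (1 - x)⁻¹) ^ d := by
      calc ∑' j, νk j ≤ ∑' j : Fin d → ℕ+, Real.exp d * ∏ i, x ^ ((j i : ℕ)) :=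
            Summable.tsum_le_tsum hpoint hsummable hmaj
        _ = Real.exp d * (∑' n : ℕ+, x ^ (n:ℕ)) ^ d := by rw [tsum_mul_left, hgt]
        _ = Real.exp d * (x * (1 - x)⁻¹) ^ d := by rw [(geom_pnat hx0.le hx1).2]
    have hfinal : Real.exp d * ((t * a)⁻¹) ^ d = (Real.exp 1 / d)^d * (a⁻¹ * L) ^ d := by
      have hexp : Real.exp (d:ℝ) = Real.exp 1 ^ d := by
        rw [← Real.exp_nat_mul, mul_one]
      rw [hexp, ← mul_pow, ← mul_pow]
      congr 1
      rw [htdef]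
      field_simp
    calc ∑' j, νk j ≤ Real.exp d * (x * (1 - x)⁻¹) ^ d := htsum_le
      _ ≤ Real.exp d * ((t * a)⁻¹) ^ d := by
          have h1x : (0:ℝ) < 1 - x := by linarith
          gcongr
          all_goals
            first
            | exact mul_nonneg hx0.le (inv_nonneg.mpr h1x.le)
            | exact hgeom_le
      _ = (Real.exp 1 / d)^d * (a⁻¹ * L) ^ d := hfinal
end

section
/- Let (μ_j)_{j∈𝒥} be nonnegative reals indexed by a countable set with ∑_j μ_j < ∞, and suppose |{j : μ_j N ≥ σ²}| ≤ N for reals N ≥ 1 and σ² ≥ c > 0. Then ∑_{j∈𝒥} μ_j − N ∑_{j ∈ 𝓙'} μ_j²/c_j ≤ C σ² ∑_{j∈𝒥} μ_j/(σ² + Nμ_j), where 𝓙' = {j : μ_j N ≥ σ²}, c_j = (N−1)μ_j + σ² + ∑_i μ_i, and C depends only on ∑_i μ_i and c. -/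
open Real

/-- Learning-curve upper bound, key algebraic step: if `∑ μ_j = S < ∞`,
`|{j : μ_j N ≥ σ²}| ≤ N`, `σ² ≥ c > 0`, then with `𝓙' = {j : μ_j N ≥ σ²}` and
`c_j = (N-1)μ_j + σ² + S`,
`∑_j μ_j − N ∑_{j∈𝓙'} μ_j²/c_j ≤ C σ² ∑_j μ_j/(σ² + Nμ_j)` where `C` depends
only on `S` and `c`. -/
theorem learning_curve_upper (S c : ℝ) (hc : 0 < c) :
    ∃ C > (0:ℝ), ∀ (ι : Type) (_ : Countable ι) (μ : ι → ℝ) (N σsq : ℝ),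
      (∀ j, 0 ≤ μ j) → Summable μ → (∑' j, μ j) = S → 1 ≤ N → c ≤ σsq →
      ({j : ι | σsq ≤ μ j * N}).Finite →
      (({j : ι | σsq ≤ μ j * N}).ncard : ℝ) ≤ N →
      (∑' j, μ j) - N * (∑' j : {j : ι | σsq ≤ μ j * N},
          (μ j.1) ^ 2 / ((N - 1) * μ j.1 + σsq + S))
        ≤ C * σsq * ∑' j, μ j / (σsq + N * μ j) := by
  refine ⟨2 * (1 + |S| / c) + 2, by positivity, ?_⟩
  intro ι _ μ N σsq hμ hsum hS hN hσ hfin _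
  haveI := hfin.to_subtype
  set s : Set ι := {j : ι | σsq ≤ μ j * N} with hs
  have hS0 : 0 ≤ S := hS ▸ tsum_nonneg hμ
  have habs : |S| = S := abs_of_nonneg hS0
  have hσ0 : 0 < σsq := lt_of_lt_of_le hc hσ
  have hμS : ∀ j, μ j ≤ S := fun j => hS ▸ Summable.le_tsum hsum j (fun i _ => hμ i)
  have hd : ∀ j, 0 < σsq + N * μ j := fun j => by
    have := hμ j; nlinarith
  set f : ι → ℝ := fun j => μ j / (σsq + N * μ j) with hf
  have hf0 : ∀ j, 0 ≤ f j := fun j => div_nonneg (hμ j) (hd j).le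
  have hfsum : Summable f := by
    refine Summable.of_nonneg_of_le hf0 (fun j => ?_) (hsum.div_const c)
    rw [hf, div_le_div_iff₀ (hd j) hc]
    have h0 := hμ j
    nlinarith [mul_nonneg h0 (mul_nonneg (zero_le_one.trans hN) h0), mul_le_mul_of_nonneg_left hσ h0]
  -- split tsums
  have hsplitμ : (∑' j : s, μ j) + (∑' j : ↥sᶜ, μ j) = ∑' j, μ j :=
    Summable.tsum_add_tsum_compl (hsum.subtype s) (hsum.subtype sᶜ)
  have hsplitf : (∑' j : s, f j) + (∑' j : ↥sᶜ, f j) = ∑' j, f j :=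
    Summable.tsum_add_tsum_compl (hfsum.subtype s) (hfsum.subtype sᶜ)
  set cc : ι → ℝ := fun j => (N - 1) * μ j + σsq + S with hcc
  have hccpos : ∀ j, 0 < cc j := fun j => by
    have := hμ j; simp only [hcc]; nlinarith
  -- term on s
  have hterm1 : ∀ j : s, μ j.1 - N * (μ j.1 ^ 2 / cc j.1)
      ≤ 2 * (1 + S / c) * σsq * f j.1 := by
    rintro ⟨j, hj⟩
    have hjs : σsq ≤ μ j * N := hj
    have h0 : cc j ≠ 0 := (hccpos j).ne'
    have h1 : μ j - N * (μ j ^ 2 / cc j) = μ j * (σsq + S - μ j) / cc j := by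
      rw [eq_div_iff h0, sub_mul, mul_assoc, div_mul_cancel₀ _ h0]
      simp only [hcc]
      ring
    rw [h1, hf]
    rw [div_le_iff₀ (hccpos j)]
    have h2 : 2 * (1 + S / c) * σsq * (μ j / (σsq + N * μ j)) * cc j
        = (2 * (1 + S / c) * σsq * μ j * cc j) / (σsq + N * μ j) := by ring
    rw [h2, le_div_iff₀ (hd j)]
    have hμj := hμ j
    have hμjS := hμS j
    have hsc : S * σsq / c ≥ S := by
      rw [ge_iff_le, le_div_iff₀ hc]; nlinarith
    have hexp : 2 * (1 + S / c) * σsq = 2 * σsq + 2 * (S * σsq / c) := by ring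
    have hK : 2 * (σsq + S) ≤ 2 * (1 + S / c) * σsq := by rw [hexp]; linarith [hsc]
    have hd2 : σsq + N * μ j ≤ 2 * cc j := by
      simp only [hcc]
      nlinarith [mul_le_mul_of_nonneg_right hN hμj]
    have hmd : μ j * (σsq + S - μ j) * (σsq + N * μ j)
        ≤ 2 * (1 + S / c) * σsq * μ j * cc j := by
      calc μ j * (σsq + S - μ j) * (σsq + N * μ j)
          ≤ μ j * (σsq + S) * (σsq + N * μ j) := by
            nlinarith [mul_nonneg (mul_nonneg hμj hμj) (hd j).le]
        _ ≤ μ j * (σsq + S) * (2 * cc j) :=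
            mul_le_mul_of_nonneg_left hd2 (mul_nonneg hμj (by linarith))
        _ = 2 * (σsq + S) * (μ j * cc j) := by ring
        _ ≤ 2 * (1 + S / c) * σsq * (μ j * cc j) :=
            mul_le_mul_of_nonneg_right hK (mul_nonneg hμj (hccpos j).le)
        _ = 2 * (1 + S / c) * σsq * μ j * cc j := by ring
    linarith [hmd]
  have hA : ∑' j : s, (μ j.1 - N * (μ j.1 ^ 2 / cc j.1))
      ≤ ∑' j : s, 2 * (1 + S / c) * σsq * f j.1 :=
    Summable.tsum_le_tsum hterm1 (Summable.of_finite) (Summable.of_finite)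
  have hA' : (∑' j : s, μ j.1) - N * (∑' j : s, μ j.1 ^ 2 / cc j.1)
      ≤ 2 * (1 + S / c) * σsq * ∑' j : s, f j.1 := by
    rw [← tsum_mul_left, ← tsum_mul_left] at *
    calc (∑' j : s, μ j.1) - ∑' j : s, N * (μ j.1 ^ 2 / cc j.1)
        = ∑' j : s, (μ j.1 - N * (μ j.1 ^ 2 / cc j.1)) :=
          (Summable.tsum_sub Summable.of_finite Summable.of_finite).symm
      _ ≤ _ := hA
  -- term off s
  have hB : (∑' j : ↥sᶜ, μ j.1) ≤ 2 * σsq * ∑' j : ↥sᶜ, f j.1 := by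
    rw [← tsum_mul_left]
    refine Summable.tsum_le_tsum ?_ (hsum.subtype sᶜ) ?_
    · rintro ⟨j, hj⟩
      have hjs : μ j * N < σsq := not_le.mp hj
      have hμj := hμ j
      show μ j ≤ 2 * σsq * (μ j / (σsq + N * μ j))
      rw [← mul_div_assoc, le_div_iff₀ (hd j)]
      nlinarith
    · exact (Summable.mul_left _ (hfsum.subtype sᶜ))
  -- combine
  have hsum_s_f : 0 ≤ ∑' j : s, f j.1 := tsum_nonneg fun j => hf0 j.1
  have hsum_c_f : 0 ≤ ∑' j : ↥sᶜ, f j.1 := tsum_nonneg fun j => hf0 j.1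
  have key : (∑' j, μ j) - N * (∑' j : s, μ j.1 ^ 2 / cc j.1)
      ≤ (2 * (1 + S / c) + 2) * σsq * ∑' j, f j := by
    rw [← hsplitμ, ← hsplitf]
    have hScnn : 0 ≤ S / c := div_nonneg hS0 hc.le
    have h1 : 0 ≤ 2 * (1 + S / c) * σsq * ∑' j : ↥sᶜ, f j.1 := by positivity
    have h2 : 0 ≤ 2 * σsq * ∑' j : s, f j.1 := by positivity
    nlinarith [hA', hB]
  rw [habs]
  have : (∑' j, μ j / (σsq + N * μ j)) = ∑' j, f j := rfl
  rw [this]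
  exact key
end

section
/- Let β ≥ 2 and c_L > 0, and define f_{0,j} = c_L j^{-1/2-β} (log j)^{-1} for integers j ≥ 3 (and 0 for j < 3). Let ν*_j = μ_j n/(1 + μ_j n) with μ_j ≍ j^{-1-2β}. Then ∑_{j} (1 − ν*_j)² f_{0,j}² ≥ c₀ n^{-2β/(1+2β)} (log n)^{-2} for some constant c₀ > 0 and all sufficiently large n. -/
open Real

set_option maxHeartbeats 1600000 in
/-- Sub-optimality of the naive method, bias lower bound: with
`f_{0,j} = c_L j^{-1/2-β} (log j)^{-1}` for `j ≥ 3`, `μ_j ≍ j^{-1-2β}` and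
`ν*_j = μ_j n/(1+μ_j n)`, one has
`∑_j (1-ν*_j)² f_{0,j}² ≥ c₀ n^{-2β/(1+2β)} (log n)^{-2}` for large `n`. -/
theorem naive_bias_lower (β cL C : ℝ) (hβ : 2 ≤ β) (hcL : 0 < cL) (hC : 1 ≤ C)
    (μ : ℕ → ℝ)
    (hμ : ∀ j : ℕ, 1 ≤ j →
      C⁻¹ * (j : ℝ) ^ (-1 - 2 * β) ≤ μ j ∧ μ j ≤ C * (j : ℝ) ^ (-1 - 2 * β)) :
    ∃ c₀ > (0:ℝ), ∃ n₀ : ℕ, ∀ n : ℕ, n₀ ≤ n →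
      c₀ * (n : ℝ) ^ (-(2 * β) / (1 + 2 * β)) * (Real.log n) ^ (-(2:ℝ)) ≤
        ∑' j : ℕ, (1 - μ j * n / (1 + μ j * n)) ^ 2 *
          (if 3 ≤ j then cL * (j : ℝ) ^ (-(1/2 : ℝ) - β) * (Real.log j)⁻¹ else 0) ^ 2 := by
  set B : ℝ := 1 + 2 * β with hB
  have hB5 : (5:ℝ) ≤ B := by rw [hB]; linarith
  have hBpos : (0:ℝ) < B := by linarith
  set γ : ℝ := 1 / B with hγ
  have hγpos : 0 < γ := by positivity
  have hγ1 : γ ≤ 1 := by rw [hγ, div_le_one hBpos]; linarith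
  have hγB : γ * B = 1 := by rw [hγ, one_div, inv_mul_cancel₀ hBpos.ne']
  set K : ℝ := 10 * C with hK
  have hK10 : (10:ℝ) ≤ K := by nlinarith
  have hKpos : (0:ℝ) < K := by linarith
  have hlogK : 0 < Real.log K := Real.log_pos (by linarith)
  have he3 : Real.exp 1 ≤ 3 := (Real.exp_one_lt_d9).le.trans (by norm_num)
  refine ⟨cL ^ 2 / (4 * K ^ B * (Real.log K + 1) ^ 2), by positivity, 3, ?_⟩
  intro n hn
  have hn3 : (3:ℝ) ≤ (n:ℝ) := by exact_mod_cast hn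
  have hnpos : (0:ℝ) < n := by linarith
  have hlogn : 1 ≤ Real.log n := by
    rw [← Real.log_exp 1]
    exact Real.log_le_log (Real.exp_pos 1) (he3.trans hn3)
  -- auxiliary: for j ≥ 3, log j ≥ 1 and μ j bounds
  have hlogj : ∀ j : ℕ, 3 ≤ j → 1 ≤ Real.log j := by
    intro j hj
    have : (3:ℝ) ≤ (j:ℝ) := by exact_mod_cast hj
    rw [← Real.log_exp 1]
    exact Real.log_le_log (Real.exp_pos 1) (he3.trans this)
  have hμpos : ∀ j : ℕ, 1 ≤ j → 0 < μ j := by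
    intro j hj
    have hj1 : (1:ℝ) ≤ (j:ℝ) := by exact_mod_cast hj
    have := (hμ j hj).1
    have hp : (0:ℝ) < (j:ℝ) ^ (-1 - 2 * β) := Real.rpow_pos_of_pos (by linarith) _
    nlinarith [inv_pos.mpr (lt_of_lt_of_le one_pos hC)]
  -- nonnegativity and summability of the summand
  set g : ℕ → ℝ := fun j => (1 - μ j * n / (1 + μ j * n)) ^ 2 *
      (if 3 ≤ j then cL * (j : ℝ) ^ (-(1/2 : ℝ) - β) * (Real.log j)⁻¹ else 0) ^ 2 with hg
  have hg0 : ∀ j, 0 ≤ g j := fun j => by positivity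
  have hA01 : ∀ j : ℕ, 1 ≤ j → 0 ≤ 1 - μ j * n / (1 + μ j * n) ∧
      1 - μ j * n / (1 + μ j * n) ≤ 1 := by
    intro j hj
    have hx0 : 0 ≤ μ j * n := mul_nonneg (hμpos j hj).le hnpos.le
    have hd : (0:ℝ) < 1 + μ j * n := by linarith
    constructor
    · have : μ j * n / (1 + μ j * n) ≤ 1 := by
        rw [div_le_one hd]; linarith
      linarith
    · have : 0 ≤ μ j * n / (1 + μ j * n) := div_nonneg hx0 hd.le
      linarith
  have hsum : Summable g := by
    have hle : ∀ j, g j ≤ cL ^ 2 * (j:ℝ) ^ (-(2:ℝ)) := by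
      intro j
      by_cases hj : 3 ≤ j
      · have hj1 : 1 ≤ j := by omega
        have hjR : (1:ℝ) ≤ (j:ℝ) := by exact_mod_cast hj1
        have hjpos : (0:ℝ) < (j:ℝ) := by linarith
        rw [hg]; simp only [if_pos hj]
        have hA := hA01 j hj1
        have h1 : (1 - μ j * n / (1 + μ j * n)) ^ 2 ≤ 1 := by nlinarith [hA.1, hA.2]
        have h2 : (cL * (j : ℝ) ^ (-(1/2 : ℝ) - β) * (Real.log j)⁻¹) ^ 2 ≤
            cL ^ 2 * (j:ℝ) ^ (-(2:ℝ)) := by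
          have hl : (Real.log j)⁻¹ ≤ 1 := by
            have := hlogj j hj
            rw [inv_le_one_iff₀]; right; linarith
          have hl0 : (0:ℝ) ≤ (Real.log j)⁻¹ := by
            have := hlogj j hj; positivity
          have hr : ((j:ℝ) ^ (-(1/2 : ℝ) - β)) ^ 2 = (j:ℝ) ^ (2 * (-(1/2 : ℝ) - β)) := by
            rw [← Real.rpow_natCast ((j:ℝ) ^ (-(1/2 : ℝ) - β)) 2, ← Real.rpow_mul hjpos.le]
            congr 1; push_cast; ring
          have hr2 : (j:ℝ) ^ (2 * (-(1/2 : ℝ) - β)) ≤ (j:ℝ) ^ (-(2:ℝ)) :=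
            Real.rpow_le_rpow_of_exponent_le hjR (by linarith)
          calc (cL * (j : ℝ) ^ (-(1/2 : ℝ) - β) * (Real.log j)⁻¹) ^ 2
              = cL ^ 2 * ((j : ℝ) ^ (-(1/2 : ℝ) - β)) ^ 2 * ((Real.log j)⁻¹) ^ 2 := by ring
            _ ≤ cL ^ 2 * ((j : ℝ) ^ (-(1/2 : ℝ) - β)) ^ 2 * 1 := by
                refine mul_le_mul_of_nonneg_left ?_ (by positivity)
                exact pow_le_one₀ hl0 hl
            _ = cL ^ 2 * (j:ℝ) ^ (2 * (-(1/2 : ℝ) - β)) := by rw [hr]; ring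
            _ ≤ cL ^ 2 * (j:ℝ) ^ (-(2:ℝ)) :=
                mul_le_mul_of_nonneg_left hr2 (by positivity)
        calc (1 - μ j * n / (1 + μ j * n)) ^ 2 *
              (cL * (j : ℝ) ^ (-(1/2 : ℝ) - β) * (Real.log j)⁻¹) ^ 2
            ≤ 1 * (cL ^ 2 * (j:ℝ) ^ (-(2:ℝ))) :=
              mul_le_mul h1 h2 (sq_nonneg _) zero_le_one
          _ = cL ^ 2 * (j:ℝ) ^ (-(2:ℝ)) := one_mul _
      · rw [hg]; simp only [if_neg hj]
        have : (0:ℝ) ≤ cL ^ 2 * (j:ℝ) ^ (-(2:ℝ)) := by positivity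
        simpa using this
    exact Summable.of_nonneg_of_le hg0 hle
      ((Real.summable_nat_rpow.mpr (by norm_num)).mul_left _)
  -- choice of the window [m, 2m)
  set a : ℝ := (C * n) ^ γ with ha
  have hCn1 : (1:ℝ) ≤ C * n := by nlinarith
  have hCnpos : (0:ℝ) < C * n := by linarith
  have ha1 : 1 ≤ a := by
    calc (1:ℝ) = 1 ^ γ := (Real.one_rpow γ).symm
      _ ≤ a := Real.rpow_le_rpow (by norm_num) hCn1 hγpos.le
  have hapos : 0 < a := by linarith
  set m : ℕ := ⌈a⌉₊ + 3 with hm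
  have hm3 : 3 ≤ m := by omega
  have ham : a ≤ (m:ℝ) := by
    have := Nat.le_ceil a
    have h2 : ((⌈a⌉₊:ℕ):ℝ) ≤ (m:ℝ) := by exact_mod_cast Nat.le.intro rfl
    linarith
  have hma : (m:ℝ) ≤ 5 * a := by
    have h1 : (⌈a⌉₊:ℝ) < a + 1 := Nat.ceil_lt_add_one hapos.le
    have : (m:ℝ) = (⌈a⌉₊:ℝ) + 3 := by push_cast [hm]; ring
    nlinarith
  have hmpos : (0:ℝ) < (m:ℝ) := by
    have : (0:ℕ) < m := by omega
    exact_mod_cast this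
  set M : ℝ := 2 * (m:ℝ) with hM
  have hM6 : (6:ℝ) ≤ M := by
    have h3 : (3:ℝ) ≤ (m:ℝ) := by exact_mod_cast hm3
    rw [hM]; linarith
  have hMpos : (0:ℝ) < M := by linarith
  have haC : a ≤ C * (n:ℝ) ^ γ := by
    have h1 : a = C ^ γ * (n:ℝ) ^ γ := by
      rw [ha, Real.mul_rpow (by linarith) hnpos.le]
    have h2 : C ^ γ ≤ C := by
      calc C ^ γ ≤ C ^ (1:ℝ) := Real.rpow_le_rpow_of_exponent_le hC hγ1
        _ = C := Real.rpow_one C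
    have h3 : (0:ℝ) < (n:ℝ) ^ γ := Real.rpow_pos_of_pos hnpos γ
    rw [h1]; exact mul_le_mul_of_nonneg_right h2 h3.le
  have hMK : M ≤ K * (n:ℝ) ^ γ := by
    rw [hM, hK]
    have h3 : (0:ℝ) < (n:ℝ) ^ γ := Real.rpow_pos_of_pos hnpos γ
    linarith
  have hna : (n:ℝ) ^ γ ≤ a := by
    rw [ha]
    exact Real.rpow_le_rpow hnpos.le (by nlinarith) hγpos.le
  -- per-term lower bound on the window
  have hterm : ∀ j ∈ Finset.Ico m (2 * m),
      (1/2:ℝ) ^ 2 * (cL * M ^ (-(1/2 : ℝ) - β) * (Real.log M)⁻¹) ^ 2 ≤ g j := by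
    intro j hj
    rw [Finset.mem_Ico] at hj
    have hjm : m ≤ j := hj.1
    have hj3 : 3 ≤ j := le_trans hm3 hjm
    have hj1 : 1 ≤ j := by omega
    have hjR3 : (3:ℝ) ≤ (j:ℝ) := by exact_mod_cast hj3
    have hjpos : (0:ℝ) < (j:ℝ) := by linarith
    have hjm' : (m:ℝ) ≤ (j:ℝ) := by exact_mod_cast hjm
    have hjM : (j:ℝ) ≤ M := by
      rw [hM]
      have : (j:ℝ) < ((2*m:ℕ):ℝ) := by exact_mod_cast hj.2
      push_cast at this ⊢; linarith
    have haj : a ≤ (j:ℝ) := le_trans ham hjm'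
    -- bound on μ j * n
    have hx1 : μ j * n ≤ 1 := by
      have hμj := (hμ j hj1).2
      have hexp : (-1 - 2 * β) = -B := by rw [hB]; ring
      have hjB : C * n ≤ (j:ℝ) ^ B := by
        calc C * n = (C*n) ^ (1:ℝ) := (Real.rpow_one _).symm
          _ = ((C*n) ^ γ) ^ B := by
              rw [← Real.rpow_mul hCnpos.le, hγB]
          _ ≤ (j:ℝ) ^ B := Real.rpow_le_rpow (Real.rpow_nonneg hCnpos.le γ) haj hBpos.le
      have hjBpos : (0:ℝ) < (j:ℝ) ^ B := Real.rpow_pos_of_pos hjpos B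
      have h2 : (j:ℝ) ^ (-1 - 2*β) = ((j:ℝ) ^ B)⁻¹ := by
        rw [hexp, Real.rpow_neg hjpos.le]
      have h3 : μ j ≤ C * ((j:ℝ) ^ B)⁻¹ := by rw [← h2]; exact hμj
      calc μ j * n ≤ C * ((j:ℝ) ^ B)⁻¹ * n := by
            nlinarith [hμpos j hj1]
        _ ≤ 1 := by
            have heq : C * ((j:ℝ) ^ B)⁻¹ * n = (C * n) / ((j:ℝ) ^ B) := by
              field_simp
            rw [heq, div_le_one hjBpos]; exact hjB
    have hx0 : 0 ≤ μ j * n := mul_nonneg (hμpos j hj1).le hnpos.le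
    have hd : (0:ℝ) < 1 + μ j * n := by linarith
    have hA : (1/2:ℝ) ≤ 1 - μ j * n / (1 + μ j * n) := by
      have : μ j * n / (1 + μ j * n) ≤ 1/2 := by
        rw [div_le_iff₀ hd]; linarith
      linarith
    -- monotone bound on f
    have hlogM : 1 ≤ Real.log M := by
      rw [← Real.log_exp 1]
      exact Real.log_le_log (Real.exp_pos 1) (by linarith [he3])
    have hlj := hlogj j hj3
    have hF : cL * M ^ (-(1/2 : ℝ) - β) * (Real.log M)⁻¹ ≤
        cL * (j:ℝ) ^ (-(1/2 : ℝ) - β) * (Real.log j)⁻¹ := by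
      have h1 : M ^ (-(1/2 : ℝ) - β) ≤ (j:ℝ) ^ (-(1/2 : ℝ) - β) :=
        Real.rpow_le_rpow_of_nonpos hjpos hjM (by linarith)
      have h2 : (Real.log M)⁻¹ ≤ (Real.log j)⁻¹ := by
        apply inv_anti₀ (by linarith)
        exact Real.log_le_log hjpos hjM
      have h3 : (0:ℝ) ≤ M ^ (-(1/2 : ℝ) - β) := Real.rpow_nonneg hMpos.le _
      have h4 : (0:ℝ) ≤ (Real.log M)⁻¹ := by positivity
      have h5 : (0:ℝ) ≤ (Real.log j)⁻¹ := by positivity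
      have h6 : (0:ℝ) ≤ (j:ℝ) ^ (-(1/2 : ℝ) - β) := Real.rpow_nonneg hjpos.le _
      calc cL * M ^ (-(1/2 : ℝ) - β) * (Real.log M)⁻¹
          ≤ cL * (j:ℝ) ^ (-(1/2 : ℝ) - β) * (Real.log M)⁻¹ :=
            mul_le_mul_of_nonneg_right (mul_le_mul_of_nonneg_left h1 hcL.le) h4
        _ ≤ cL * (j:ℝ) ^ (-(1/2 : ℝ) - β) * (Real.log j)⁻¹ :=
            mul_le_mul_of_nonneg_left h2 (by positivity)
    have hF0 : (0:ℝ) ≤ cL * M ^ (-(1/2 : ℝ) - β) * (Real.log M)⁻¹ := by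
      have : (0:ℝ) ≤ M ^ (-(1/2 : ℝ) - β) := Real.rpow_nonneg hMpos.le _
      have h4 : (0:ℝ) < Real.log M := by linarith
      positivity
    rw [hg]; simp only [if_pos hj3]
    have hsq1 : ((1:ℝ)/2) ^ 2 ≤ (1 - μ j * n / (1 + μ j * n)) ^ 2 :=
      pow_le_pow_left₀ (by norm_num) hA 2
    have hsq2 : (cL * M ^ (-(1/2 : ℝ) - β) * (Real.log M)⁻¹) ^ 2 ≤
        (cL * (j:ℝ) ^ (-(1/2 : ℝ) - β) * (Real.log j)⁻¹) ^ 2 :=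
      pow_le_pow_left₀ hF0 hF 2
    nlinarith [sq_nonneg (1 - μ j * n / (1 + μ j * n)), sq_nonneg (cL * M ^ (-(1/2 : ℝ) - β) * (Real.log M)⁻¹)]
  -- sum over the window
  have hwin : (m:ℝ) * ((1/2:ℝ) ^ 2 * (cL * M ^ (-(1/2 : ℝ) - β) * (Real.log M)⁻¹) ^ 2) ≤
      ∑ j ∈ Finset.Ico m (2 * m), g j := by
    have hcard : (Finset.Ico m (2 * m)).card = m := by
      rw [Nat.card_Ico]; omega
    calc (m:ℝ) * ((1/2:ℝ) ^ 2 * (cL * M ^ (-(1/2 : ℝ) - β) * (Real.log M)⁻¹) ^ 2)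
        = ∑ _j ∈ Finset.Ico m (2 * m),
            ((1/2:ℝ) ^ 2 * (cL * M ^ (-(1/2 : ℝ) - β) * (Real.log M)⁻¹) ^ 2) := by
          rw [Finset.sum_const, hcard, nsmul_eq_mul]
      _ ≤ ∑ j ∈ Finset.Ico m (2 * m), g j := Finset.sum_le_sum hterm
  have hts : ∑ j ∈ Finset.Ico m (2 * m), g j ≤ ∑' j, g j :=
    Summable.sum_le_tsum _ (fun j _ => hg0 j) hsum
  -- final comparison
  have key : cL ^ 2 / (4 * K ^ B * (Real.log K + 1) ^ 2) *
      (n : ℝ) ^ (-(2 * β) / (1 + 2 * β)) * (Real.log n) ^ (-(2:ℝ)) ≤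
      (m:ℝ) * ((1/2:ℝ) ^ 2 * (cL * M ^ (-(1/2 : ℝ) - β) * (Real.log M)⁻¹) ^ 2) := by
    have hngpos : (0:ℝ) < (n:ℝ) ^ γ := Real.rpow_pos_of_pos hnpos γ
    -- rewrite LHS pieces
    have hexp1 : -(2 * β) / (1 + 2 * β) = γ + (-1:ℝ) := by
      rw [hγ, hB]
      field_simp
      try ring
    have hrw1 : (n : ℝ) ^ (-(2 * β) / (1 + 2 * β)) = (n:ℝ) ^ γ * (n:ℝ)⁻¹ := by
      rw [hexp1, Real.rpow_add hnpos, Real.rpow_neg_one]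
    have hrw2 : (Real.log n) ^ (-(2:ℝ)) = ((Real.log n) ^ 2)⁻¹ := by
      rw [Real.rpow_neg (by linarith), show ((2:ℝ)) = ((2:ℕ):ℝ) by norm_num,
        Real.rpow_natCast]
    -- inequality (I): m * M^{-B} ≥ K^{-B} n^{γ-1}
    have hMB : ((n:ℝ) ^ γ) * ((K * (n:ℝ)^γ) ^ B)⁻¹ ≤ (m:ℝ) * (M ^ B)⁻¹ := by
      have hKn : (0:ℝ) < K * (n:ℝ)^γ := by positivity
      have h1 : M ^ B ≤ (K * (n:ℝ)^γ) ^ B := Real.rpow_le_rpow hMpos.le hMK hBpos.le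
      have h2 : ((K * (n:ℝ)^γ) ^ B)⁻¹ ≤ (M ^ B)⁻¹ := by
        apply inv_anti₀ (Real.rpow_pos_of_pos hMpos B) h1
      have h3 : (n:ℝ)^γ ≤ (m:ℝ) := le_trans hna ham
      have h4 : (0:ℝ) < ((K * (n:ℝ)^γ) ^ B)⁻¹ := by
        positivity
      nlinarith
    have hKnB : ((K * (n:ℝ)^γ) ^ B)⁻¹ = (K ^ B)⁻¹ * (n:ℝ)⁻¹ := by
      rw [Real.mul_rpow hKpos.le hngpos.le, ← Real.rpow_mul hnpos.le γ B, hγB,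
        Real.rpow_one, mul_inv]
    -- inequality (II): (log M)^{-2} ≥ ((log K + 1)^2 (log n)^2)^{-1}
    have hlogM : Real.log M ≤ (Real.log K + 1) * Real.log n := by
      have h1 : Real.log M ≤ Real.log (K * (n:ℝ)^γ) :=
        Real.log_le_log hMpos hMK
      have h2 : Real.log (K * (n:ℝ)^γ) = Real.log K + γ * Real.log n := by
        rw [Real.log_mul (ne_of_gt hKpos) (ne_of_gt hngpos), Real.log_rpow hnpos]
      have h3 : γ * Real.log n ≤ Real.log n := by nlinarith
      have h4 : Real.log K ≤ Real.log K * Real.log n := by nlinarith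
      nlinarith
    have hlogM1 : 1 ≤ Real.log M := by
      rw [← Real.log_exp 1]
      exact Real.log_le_log (Real.exp_pos 1) (by linarith [he3])
    have hlogsq : ((Real.log K + 1) ^ 2 * (Real.log n)^2)⁻¹ ≤ ((Real.log M)^2)⁻¹ := by
      apply inv_anti₀ (by positivity)
      nlinarith
    -- assemble
    have hMe : (cL * M ^ (-(1/2 : ℝ) - β) * (Real.log M)⁻¹) ^ 2 =
        cL ^ 2 * (M ^ B)⁻¹ * ((Real.log M)^2)⁻¹ := by
      have h1 : (M ^ (-(1/2 : ℝ) - β)) ^ 2 = (M ^ B)⁻¹ := by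
        rw [sq, ← Real.rpow_add hMpos, ← Real.rpow_neg hMpos.le]
        congr 1; rw [hB]; ring
      calc (cL * M ^ (-(1/2 : ℝ) - β) * (Real.log M)⁻¹) ^ 2
          = cL ^ 2 * (M ^ (-(1/2 : ℝ) - β)) ^ 2 * ((Real.log M)⁻¹)^2 := by ring
        _ = cL ^ 2 * (M ^ B)⁻¹ * ((Real.log M)^2)⁻¹ := by rw [h1, ← inv_pow]
    rw [hrw1, hrw2, hMe]
    have hLHS : cL ^ 2 / (4 * K ^ B * (Real.log K + 1) ^ 2) *
        ((n:ℝ) ^ γ * (n:ℝ)⁻¹) * ((Real.log n) ^ 2)⁻¹ =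
        (1/4 : ℝ) * cL ^ 2 * ((n:ℝ) ^ γ * ((K^B)⁻¹ * (n:ℝ)⁻¹)) *
          ((Real.log K + 1) ^ 2 * (Real.log n)^2)⁻¹ := by
      rw [div_eq_mul_inv, mul_inv, mul_inv, mul_inv]
      ring
    rw [hLHS, ← hKnB]
    have hst1 : (0:ℝ) ≤ (n:ℝ) ^ γ * ((K * (n:ℝ)^γ) ^ B)⁻¹ := by positivity
    have hst2 : (0:ℝ) ≤ ((Real.log K + 1) ^ 2 * (Real.log n)^2)⁻¹ := by positivity
    have hst3 : (0:ℝ) ≤ (m:ℝ) * (M^B)⁻¹ := by positivity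
    calc (1/4 : ℝ) * cL ^ 2 * ((n:ℝ) ^ γ * ((K * (n:ℝ)^γ) ^ B)⁻¹) *
          ((Real.log K + 1) ^ 2 * (Real.log n)^2)⁻¹
        ≤ (1/4 : ℝ) * cL ^ 2 * ((m:ℝ) * (M^B)⁻¹) * ((Real.log M)^2)⁻¹ := by
          have hq : (0:ℝ) ≤ (1/4:ℝ) * cL^2 := by positivity
          have hmain := mul_le_mul hMB hlogsq hst2 hst3
          calc (1/4 : ℝ) * cL ^ 2 * ((n:ℝ) ^ γ * ((K * (n:ℝ)^γ) ^ B)⁻¹) *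
                ((Real.log K + 1) ^ 2 * (Real.log n)^2)⁻¹
              = (1/4:ℝ) * cL^2 * (((n:ℝ) ^ γ * ((K * (n:ℝ)^γ) ^ B)⁻¹) *
                  ((Real.log K + 1) ^ 2 * (Real.log n)^2)⁻¹) := by ring
            _ ≤ (1/4:ℝ) * cL^2 * (((m:ℝ) * (M^B)⁻¹) * ((Real.log M)^2)⁻¹) :=
                mul_le_mul_of_nonneg_left hmain hq
            _ = (1/4 : ℝ) * cL ^ 2 * ((m:ℝ) * (M^B)⁻¹) * ((Real.log M)^2)⁻¹ := by ring
      _ = (m:ℝ) * ((1/2:ℝ) ^ 2 * (cL ^ 2 * (M ^ B)⁻¹ * ((Real.log M)^2)⁻¹)) := by ring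
  calc cL ^ 2 / (4 * K ^ B * (Real.log K + 1) ^ 2) *
        (n : ℝ) ^ (-(2 * β) / (1 + 2 * β)) * (Real.log n) ^ (-(2:ℝ))
      ≤ (m:ℝ) * ((1/2:ℝ) ^ 2 * (cL * M ^ (-(1/2 : ℝ) - β) * (Real.log M)⁻¹) ^ 2) := key
    _ ≤ ∑ j ∈ Finset.Ico m (2 * m), g j := hwin
    _ ≤ ∑' j, g j := hts
end

section
/- Let W_n be a chi-squared random variable with n degrees of freedom and C₀ > 1. Then for all sufficiently large n, E[W_n · 1{W_n ≥ n^{C₀}}] ≤ e^{-n^{C₀}/3}. -/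
open Real MeasureTheory Set Filter Asymptotics


lemma exp_quarter_integral (t : ℝ) :
    ∫ x in Set.Ioi t, Real.exp (-x / 4) = 4 * Real.exp (-t / 4) := by
  have hderiv : ∀ x ∈ Set.Ici t, HasDerivAt (fun x : ℝ => -4 * Real.exp (-x / 4))
      (Real.exp (-x / 4)) x := by
    intro x _
    have h : HasDerivAt (fun x : ℝ => -x / 4) (-(1 / 4)) x := by
      have := (hasDerivAt_id x).neg.div_const 4; norm_num at this ⊢; exact this
    have := (h.exp).const_mul (-4 : ℝ)
    refine this.congr_deriv ?_
    ring
  have htend : Tendsto (fun x : ℝ => -4 * Real.exp (-x / 4)) atTop (nhds 0) := by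
    have h1 : Tendsto (fun x : ℝ => -x / 4) atTop atBot := by
      apply Filter.Tendsto.atBot_div_const (by norm_num)
      exact tendsto_neg_atTop_atBot
    have := (Real.tendsto_exp_atBot.comp h1).const_mul (-4 : ℝ)
    simpa using this
  have hint : IntegrableOn (fun x : ℝ => Real.exp (-x / 4)) (Set.Ioi t) := by
    have := exp_neg_integrableOn_Ioi t (by norm_num : (0:ℝ) < 1/4)
    refine this.congr_fun (fun x _ => by ring_nf) measurableSet_Ioi
  have := MeasureTheory.integral_Ioi_of_hasDerivAt_of_tendsto
    ((hderiv t (Set.self_mem_Ici)).continuousAt.continuousWithinAt)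
    (fun x hx => hderiv x (Set.mem_Ici.mpr (le_of_lt hx))) hint htend
  rw [this]; ring

lemma chi_asymp (C₀ : ℝ) (hC₀ : 1 < C₀) : ∀ᶠ x : ℝ in atTop,
    4 ≤ x ∧ 2 * x ≤ x ^ C₀ ∧
      Real.log 4 + x / 2 * (C₀ * Real.log x) ≤ x ^ C₀ / 6 := by
  have h1 : ∀ᶠ x : ℝ in atTop, (4:ℝ) ≤ x := eventually_ge_atTop 4
  have h2 : ∀ᶠ x : ℝ in atTop, 2 * x ≤ x ^ C₀ := by
    have ht : Tendsto (fun x : ℝ => x ^ (C₀ - 1)) atTop atTop :=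
      tendsto_rpow_atTop (by linarith)
    filter_upwards [ht.eventually_ge_atTop 2, eventually_gt_atTop (0:ℝ)] with x hx hx0
    have : x ^ C₀ = x * x ^ (C₀ - 1) := by
      nth_rewrite 2 [← Real.rpow_one x]
      rw [← Real.rpow_add hx0]; ring_nf
    rw [this]
    calc 2 * x = x * 2 := by ring
    _ ≤ x * x ^ (C₀ - 1) := by gcongr
  have h3 : ∀ᶠ x : ℝ in atTop,
      Real.log 4 + x / 2 * (C₀ * Real.log x) ≤ x ^ C₀ / 6 := by
    have hlog : (fun x : ℝ => Real.log x) =o[atTop] fun x => x ^ (C₀ - 1) :=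
      isLittleO_log_rpow_atTop (by linarith)
    have hxlog : (fun x : ℝ => x * Real.log x) =o[atTop] fun x => x ^ C₀ := by
      have := (isBigO_refl (fun x : ℝ => x) atTop).mul_isLittleO hlog
      refine this.trans_isBigO (IsBigO.of_bound 1 ?_)
      filter_upwards [eventually_gt_atTop (0:ℝ)] with x hx0
      have : x * x ^ (C₀ - 1) = x ^ C₀ := by
        nth_rewrite 1 [← Real.rpow_one x]
        rw [← Real.rpow_add hx0]; ring_nf
      rw [this]; simp
    have hconst : (fun _ : ℝ => Real.log 4) =o[atTop] fun x : ℝ => x ^ C₀ := by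
      refine isLittleO_const_left.2 (Or.inr ?_)
      exact tendsto_abs_atTop_atTop.comp (tendsto_rpow_atTop (by linarith))
    have hsum : (fun x : ℝ => Real.log 4 + x / 2 * (C₀ * Real.log x)) =o[atTop]
        fun x : ℝ => x ^ C₀ := by
      have h2' : (fun x : ℝ => x / 2 * (C₀ * Real.log x)) =o[atTop]
          fun x : ℝ => x ^ C₀ := by
        have := hxlog.const_mul_left (C₀ / 2)
        refine this.congr' ?_ (by rfl)
        filter_upwards with x; ring
      exact hconst.add h2'
    filter_upwards [hsum.bound (by norm_num : (0:ℝ) < 1/6),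
      eventually_ge_atTop (0:ℝ)] with x hx hx0
    calc Real.log 4 + x / 2 * (C₀ * Real.log x)
        ≤ ‖Real.log 4 + x / 2 * (C₀ * Real.log x)‖ := le_norm_self _
      _ ≤ 1/6 * ‖x ^ C₀‖ := hx
      _ = x ^ C₀ / 6 := by
          rw [Real.norm_eq_abs, abs_of_nonneg (Real.rpow_nonneg hx0 _)]; ring
  filter_upwards [h1, h2, h3] with x a b c using ⟨a, b, c⟩

/-- Truncated first moment of a chi-squared random variable with `n` degrees of
freedom: for `C₀ > 1` and `n` large enough,
`E[W_n 1{W_n ≥ n^{C₀}}] ≤ e^{-n^{C₀}/3}`. -/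
theorem chi_sq_truncated_moment (C₀ : ℝ) (hC₀ : 1 < C₀) :
    ∃ n₀ : ℕ, ∀ n : ℕ, n₀ ≤ n →
      (∫ x in Set.Ici ((n : ℝ) ^ C₀),
          x * (x ^ ((n : ℝ) / 2 - 1) * Real.exp (-x / 2) /
            (2 ^ ((n : ℝ) / 2) * Real.Gamma ((n : ℝ) / 2))))
        ≤ Real.exp (-(n : ℝ) ^ C₀ / 3) := by
  have hev : ∀ᶠ n : ℕ in atTop, 4 ≤ (n:ℝ) ∧ 2 * (n:ℝ) ≤ (n:ℝ) ^ C₀ ∧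
      Real.log 4 + (n:ℝ) / 2 * (C₀ * Real.log (n:ℝ)) ≤ (n:ℝ) ^ C₀ / 6 :=
    tendsto_natCast_atTop_atTop.eventually (chi_asymp C₀ hC₀)
  obtain ⟨n₀, hn₀⟩ := eventually_atTop.mp hev
  refine ⟨n₀, fun n hn => ?_⟩
  obtain ⟨hn4, hlin, hlog⟩ := hn₀ n hn
  set t : ℝ := (n:ℝ) ^ C₀ with ht_def
  set p : ℝ := (n:ℝ) / 2 with hp_def
  have hn0 : (0:ℝ) < (n:ℝ) := by linarith
  have hp2 : (2:ℝ) ≤ p := by rw [hp_def]; linarith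
  have hp0 : (0:ℝ) < p := by linarith
  have ht0 : (0:ℝ) < t := Real.rpow_pos_of_pos hn0 _
  have h4p : 4 * p ≤ t := by rw [hp_def]; linarith
  set D : ℝ := 2 ^ p * Real.Gamma p with hD_def
  have hD1 : (1:ℝ) ≤ D := by
    have h2p : (1:ℝ) ≤ 2 ^ p := Real.one_le_rpow (by norm_num) hp0.le
    have hΓ : (1:ℝ) ≤ Real.Gamma p := by
      have := Real.Gamma_strictMonoOn_Ici.monotoneOn (Set.mem_Ici.mpr le_rfl)
        (Set.mem_Ici.mpr hp2) hp2
      rwa [Real.Gamma_two] at this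
    calc (1:ℝ) = 1 * 1 := by ring
    _ ≤ 2 ^ p * Real.Gamma p := by gcongr
  have hD0 : (0:ℝ) < D := lt_of_lt_of_le one_pos hD1
  set K : ℝ := t ^ p * Real.exp (-t / 4) with hK_def
  have hK0 : (0:ℝ) ≤ K := mul_nonneg (Real.rpow_nonneg ht0.le _) (Real.exp_pos _).le
  -- pointwise bound on Ioi t
  have hbound : ∀ x ∈ Set.Ioi t, x * (x ^ (p - 1) * Real.exp (-x / 2) / D)
      ≤ K * Real.exp (-x / 4) := by
    intro x hx
    have hxt : t < x := hx
    have hx0 : (0:ℝ) < x := lt_trans ht0 hxt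
    have hxp : x * x ^ (p - 1) = x ^ p := by
      nth_rewrite 1 [← Real.rpow_one x]
      rw [← Real.rpow_add hx0]; ring_nf
    have step1 : x * (x ^ (p - 1) * Real.exp (-x / 2) / D)
        ≤ x ^ p * Real.exp (-x / 2) := by
      rw [mul_div_assoc', ← mul_assoc, hxp]
      exact div_le_self (by positivity) hD1
    have step2 : x ^ p ≤ t ^ p * Real.exp ((x - t) / 4) := by
      rw [Real.rpow_def_of_pos hx0, Real.rpow_def_of_pos ht0, ← Real.exp_add]
      apply Real.exp_le_exp.mpr
      have hlog2 : Real.log x - Real.log t ≤ (x - t) / t := by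
        have := Real.log_le_sub_one_of_pos (div_pos hx0 ht0)
        rw [Real.log_div hx0.ne' ht0.ne'] at this
        calc Real.log x - Real.log t ≤ x / t - 1 := this
        _ = (x - t) / t := by field_simp
      have hpt : p / t ≤ 1 / 4 := by
        rw [div_le_div_iff₀ ht0 (by norm_num)]; linarith
      have : p * (Real.log x - Real.log t) ≤ (x - t) / 4 := by
        calc p * (Real.log x - Real.log t) ≤ p * ((x - t) / t) := by
              apply mul_le_mul_of_nonneg_left hlog2 hp0.le
          _ = (x - t) * (p / t) := by ring
          _ ≤ (x - t) * (1 / 4) := by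
              apply mul_le_mul_of_nonneg_left hpt (by linarith)
          _ = (x - t) / 4 := by ring
      linarith
    calc x * (x ^ (p - 1) * Real.exp (-x / 2) / D)
        ≤ x ^ p * Real.exp (-x / 2) := step1
      _ ≤ t ^ p * Real.exp ((x - t) / 4) * Real.exp (-x / 2) := by
          apply mul_le_mul_of_nonneg_right step2 (Real.exp_pos _).le
      _ = K * Real.exp (-x / 4) := by
          rw [hK_def, mul_assoc, mul_assoc, ← Real.exp_add, ← Real.exp_add]
          ring_nf
  -- integrability
  have hg_int : IntegrableOn (fun x : ℝ => K * Real.exp (-x / 4)) (Set.Ioi t) := by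
    apply Integrable.const_mul
    have := exp_neg_integrableOn_Ioi t (by norm_num : (0:ℝ) < 1/4)
    refine this.congr_fun (fun x _ => by ring_nf) measurableSet_Ioi
  have hf_meas : AEStronglyMeasurable
      (fun x : ℝ => x * (x ^ (p - 1) * Real.exp (-x / 2) / D))
      (volume.restrict (Set.Ioi t)) := by
    apply Measurable.aestronglyMeasurable
    fun_prop
  have hf_nonneg : ∀ x ∈ Set.Ioi t, 0 ≤ x * (x ^ (p - 1) * Real.exp (-x / 2) / D) := by
    intro x hx
    have hx0 : (0:ℝ) < x := lt_trans ht0 hx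
    positivity
  have hf_int : IntegrableOn
      (fun x : ℝ => x * (x ^ (p - 1) * Real.exp (-x / 2) / D)) (Set.Ioi t) := by
    apply Integrable.mono' hg_int hf_meas
    filter_upwards [ae_restrict_mem measurableSet_Ioi] with x hx
    rw [Real.norm_eq_abs, abs_of_nonneg (hf_nonneg x hx)]
    exact hbound x hx
  -- main chain
  rw [MeasureTheory.integral_Ici_eq_integral_Ioi]
  calc (∫ x in Set.Ioi t, x * (x ^ (p - 1) * Real.exp (-x / 2) / D))
      ≤ ∫ x in Set.Ioi t, K * Real.exp (-x / 4) :=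
        setIntegral_mono_on hf_int hg_int measurableSet_Ioi hbound
    _ = K * (4 * Real.exp (-t / 4)) := by
        rw [MeasureTheory.integral_const_mul, exp_quarter_integral]
    _ = 4 * t ^ p * (Real.exp (-t / 4) * Real.exp (-t / 4)) := by
        rw [hK_def]; ring
    _ = 4 * t ^ p * Real.exp (-t / 2) := by rw [← Real.exp_add]; ring_nf
    _ ≤ Real.exp (t / 6) * Real.exp (-t / 2) := by
        apply mul_le_mul_of_nonneg_right _ (Real.exp_pos _).le
        have h4t : 4 * t ^ p = Real.exp (Real.log 4 + Real.log t * p) := by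
          rw [Real.exp_add, Real.exp_log (by norm_num : (0:ℝ) < 4),
            Real.rpow_def_of_pos ht0]
        rw [h4t]
        apply Real.exp_le_exp.mpr
        have hlt : Real.log t = C₀ * Real.log (n:ℝ) := Real.log_rpow hn0 _
        rw [hlt, mul_comm (C₀ * Real.log (n:ℝ)) p]
        exact hlog
    _ = Real.exp (-t / 3) := by rw [← Real.exp_add]; ring_nf
end
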